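/- arXiv:2512.10177 — 4 statements merged into one kernel-verified Lean document; each statement's English description precedes it below -/
import Mathlib

section
/- Let G be a finite simple graph and k ∈ ℕ. If K is a clique of order at least 3 in B_k(G) and there exists a vertex a ∈ V(G) such that P − a = P' − a for all P, P' ∈ K (i.e., every edge of K is realized by a), then such a vertex a is unique. -/
open SimpleGraph

variable {V : Type*} [Fintype V] [DecidableEq V]

/-- Delete the vertex `v` from its part: `P − v`. -/
def eraseVtx (P : Multiset (Finset V)) (v : V) : Multiset (Finset V) :=
  P.map (fun s => s.erase v)

/-- A stable `k`-partition of `G`: a multiset of exactly `k` independent sets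
(empty parts allowed) that are pairwise disjoint and whose union is `V(G)`.
(Pairwise disjointness together with covering is encoded by requiring that the
multiset sum of the parts is exactly the multiset of all vertices.) -/
def IsStablePartition (G : SimpleGraph V) (k : ℕ) (P : Multiset (Finset V)) : Prop :=
  Multiset.card P = k ∧ (P.map Finset.val).sum = (Finset.univ : Finset V).val ∧
    ∀ s ∈ P, ∀ a ∈ s, ∀ b ∈ s, ¬ G.Adj a b

/-- The Bell `k`-coloring graph of `G`. -/
def bellGraph (G : SimpleGraph V) (k : ℕ) :
    SimpleGraph {P : Multiset (Finset V) // IsStablePartition G k P} where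
  Adj P Q := P ≠ Q ∧ ∃ v : V, eraseVtx P.1 v = eraseVtx Q.1 v
  symm := by
    constructor
    rintro P Q ⟨hne, v, hv⟩
    exact ⟨hne.symm, v, hv.symm⟩
  loopless := by
    constructor
    rintro P ⟨hne, _⟩
    exact hne rfl


private lemma mem_msum {α : Type*} {s : Multiset (Multiset α)} {a : α} :
    a ∈ s.sum ↔ ∃ t ∈ s, a ∈ t := by
  induction s using Multiset.induction with
  | empty => simp
  | cons x s ih => simp [Multiset.mem_add, ih]

/-- In a multiset of finsets whose vals sum to `univ.val`, each vertex lies in a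
part, and no other occurrence of a part contains it. -/
private lemma part_exists (X : Multiset (Finset V))
    (h : (X.map Finset.val).sum = (Finset.univ : Finset V).val) (v : V) :
    ∃ s ∈ X, v ∈ s ∧ ∀ t ∈ X.erase s, v ∉ t := by
  have hcount : Multiset.count v (X.map Finset.val).sum = 1 := by
    rw [h]
    exact Multiset.count_eq_one_of_mem Finset.univ.nodup (Finset.mem_univ v)
  have hmem : v ∈ (X.map Finset.val).sum := by
    rw [← Multiset.count_pos, hcount]; norm_num
  obtain ⟨m, hm, hvm⟩ := mem_msum.mp hmem
  obtain ⟨s, hsX, rfl⟩ := Multiset.mem_map.mp hm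
  refine ⟨s, hsX, hvm, ?_⟩
  intro t htX hvt
  have hX' : X = s ::ₘ X.erase s := (Multiset.cons_erase hsX).symm
  have hsplit : (X.map Finset.val).sum = s.val + ((X.erase s).map Finset.val).sum := by
    conv_lhs => rw [hX']
    simp
  have hc1 : 1 ≤ Multiset.count v s.val := Multiset.one_le_count_iff_mem.mpr hvm
  have hc2 : Multiset.count v (((X.erase s).map Finset.val).sum) = 0 := by
    have := hcount
    rw [hsplit, Multiset.count_add] at this
    omega
  have : v ∈ ((X.erase s).map Finset.val).sum :=
    mem_msum.mpr ⟨t.val, Multiset.mem_map_of_mem _ htX, hvt⟩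
  rw [← Multiset.count_pos, hc2] at this
  omega

private lemma part_unique {X : Multiset (Finset V)} {s : Finset V} {v : V}
    (hs : s ∈ X) (hv : ∀ t ∈ X.erase s, v ∉ t)
    {t : Finset V} (ht : t ∈ X) (hvt : v ∈ t) : t = s := by
  by_contra hne
  exact hv t ((Multiset.mem_erase_of_ne hne).mpr ht) hvt

private lemma map_erase_eq (X : Multiset (Finset V)) (v : V) (s : Finset V)
    (hs : s ∈ X) (hv : ∀ t ∈ X.erase s, v ∉ t) :
    eraseVtx X v = (s.erase v) ::ₘ X.erase s := by
  unfold eraseVtx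
  conv_lhs => rw [(Multiset.cons_erase hs).symm]
  rw [Multiset.map_cons]
  congr 1
  rw [Multiset.map_congr rfl (fun t ht => Finset.erase_eq_of_notMem (hv t ht))]
  simp

/-- If the `a`-parts of `X` and `Y` agree after erasing `a`, and `X − a = Y − a`,
then `X = Y`. -/
private lemma eq_of_a {X Y : Multiset (Finset V)} {a : V} {s t : Finset V}
    (hsX : s ∈ X) (has : a ∈ s) (hsu : ∀ u ∈ X.erase s, a ∉ u)
    (htY : t ∈ Y) (hat : a ∈ t) (htu : ∀ u ∈ Y.erase t, a ∉ u)
    (hEq : eraseVtx X a = eraseVtx Y a)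
    (hst : s.erase a = t.erase a) : X = Y := by
  rw [map_erase_eq X a s hsX hsu, map_erase_eq Y a t htY htu, hst] at hEq
  have h3 : X.erase s = Y.erase t := (Multiset.cons_inj_right _).mp hEq
  have hstfull : s = t := by
    rw [← Finset.insert_erase has, hst, Finset.insert_erase hat]
  rw [← Multiset.cons_erase hsX, ← Multiset.cons_erase htY, h3, hstfull]

/-- If `X − b = Y − b` and `a ≠ b`, the `a`-parts of `X` and `Y` agree after
erasing `b`. -/
private lemma erase_b_eq {X Y : Multiset (Finset V)} {a b : V} (hab : a ≠ b)
    {s t : Finset V}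
    (hsX : s ∈ X) (has : a ∈ s) (hsu : ∀ u ∈ X.erase s, a ∉ u)
    (htY : t ∈ Y) (hat : a ∈ t)
    (hEq : eraseVtx X b = eraseVtx Y b) :
    s.erase b = t.erase b := by
  have hmem : t.erase b ∈ eraseVtx X b := by
    rw [hEq]; exact Multiset.mem_map_of_mem _ htY
  obtain ⟨s₂, hs₂X, hs₂⟩ := Multiset.mem_map.mp hmem
  have ha2 : a ∈ s₂ := by
    have hmem2 : a ∈ t.erase b := Finset.mem_erase.mpr ⟨hab, hat⟩
    rw [← hs₂] at hmem2
    exact Finset.mem_of_mem_erase hmem2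
  have h2 : s₂ = s := part_unique hsX hsu hs₂X ha2
  rw [← hs₂, h2]

/-- **Anchor uniqueness.** If `K` is a clique of order at least 3 in the Bell
`k`-coloring graph of `G` and every edge of `K` is realized by `a` and also by
`b`, then `a = b`. -/
theorem anchor_uniqueness (G : SimpleGraph V) (k : ℕ)
    (K : Finset {P : Multiset (Finset V) // IsStablePartition G k P})
    (hclique : (bellGraph G k).IsClique (K : Set _)) (hcard : 3 ≤ K.card)
    (a b : V)
    (ha : ∀ P ∈ K, ∀ Q ∈ K, eraseVtx P.1 a = eraseVtx Q.1 a)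
    (hb : ∀ P ∈ K, ∀ Q ∈ K, eraseVtx P.1 b = eraseVtx Q.1 b) :
    a = b := by
  by_contra hab
  -- extract three pairwise distinct elements of K
  have h1 : K.Nonempty := Finset.card_pos.mp (by omega)
  obtain ⟨P, hP⟩ := h1
  have h2 : (K.erase P).Nonempty := Finset.card_pos.mp (by
    rw [Finset.card_erase_of_mem hP]; omega)
  obtain ⟨Q, hQ'⟩ := h2
  have h3 : ((K.erase P).erase Q).Nonempty := Finset.card_pos.mp (by
    rw [Finset.card_erase_of_mem hQ', Finset.card_erase_of_mem hP]; omega)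
  obtain ⟨R, hR'⟩ := h3
  have hQP : Q ≠ P := (Finset.mem_erase.mp hQ').1
  have hQ : Q ∈ K := (Finset.mem_erase.mp hQ').2
  have hRQ : R ≠ Q := (Finset.mem_erase.mp hR').1
  have hRP : R ≠ P := (Finset.mem_erase.mp (Finset.mem_erase.mp hR').2).1
  have hR : R ∈ K := (Finset.mem_erase.mp (Finset.mem_erase.mp hR').2).2
  -- the a-parts
  obtain ⟨sP, hsP, haP, huP⟩ := part_exists P.1 P.2.2.1 a
  obtain ⟨sQ, hsQ, haQ, huQ⟩ := part_exists Q.1 Q.2.2.1 a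
  obtain ⟨sR, hsR, haR, huR⟩ := part_exists R.1 R.2.2.1 a
  -- key: if two distinct members have matching b-membership in their a-parts, contradiction
  have key : ∀ X : {P : Multiset (Finset V) // IsStablePartition G k P}, ∀ hX : X ∈ K,
      ∀ Y : {P : Multiset (Finset V) // IsStablePartition G k P}, ∀ hY : Y ∈ K,
      ∀ s t : Finset V, s ∈ X.1 → a ∈ s → (∀ u ∈ X.1.erase s, a ∉ u) →
      t ∈ Y.1 → a ∈ t → (∀ u ∈ Y.1.erase t, a ∉ u) →
      (b ∈ s ↔ b ∈ t) → X = Y := by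
    intro X hX Y hY s t hsX has hsu htY hat htu hbiff
    have heb : s.erase b = t.erase b :=
      erase_b_eq hab hsX has hsu htY hat (hb X hX Y hY)
    have hst : s = t := by
      by_cases hbs : b ∈ s
      · rw [← Finset.insert_erase hbs, heb, Finset.insert_erase (hbiff.mp hbs)]
      · have hbt : b ∉ t := fun h => hbs (hbiff.mpr h)
        rw [← Finset.erase_eq_of_notMem hbs, heb, Finset.erase_eq_of_notMem hbt]
    exact Subtype.ext (eq_of_a hsX has hsu htY hat htu (ha X hX Y hY) (by rw [hst]))
  -- pigeonhole on b-membership among the three a-parts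
  by_cases hbP : b ∈ sP <;> by_cases hbQ : b ∈ sQ <;> by_cases hbR : b ∈ sR
  · exact hQP (key Q hQ P hP sQ sP hsQ haQ huQ hsP haP huP (by tauto))
  · exact hQP (key Q hQ P hP sQ sP hsQ haQ huQ hsP haP huP (by tauto))
  · exact hRP (key R hR P hP sR sP hsR haR huR hsP haP huP (by tauto))
  · exact hRQ (key R hR Q hQ sR sQ hsR haR huR hsQ haQ huQ (by tauto))
  · exact hRQ (key R hR Q hQ sR sQ hsR haR huR hsQ haQ huQ (by tauto))
  · exact hRP (key R hR P hP sR sP hsR haR huR hsP haP huP (by tauto))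
  · exact hQP (key Q hQ P hP sQ sP hsQ haQ huQ hsP haP huP (by tauto))
  · exact hQP (key Q hQ P hP sQ sP hsQ haQ huQ hsP haP huP (by tauto))
end

section
/- Let G be a finite simple graph, k ∈ ℕ, and let {P_1, P_2, P_3} be a triangle in B_k(G). For 1 ≤ i < j ≤ 3 set V_{ij} = {v ∈ V(G) : P_i ∼_v P_j}. Then exactly one of the following holds: (1) V_{12} ∩ V_{23} ∩ V_{31} ≠ ∅, in which case the triangle is an S-clique; or (2) the sets V_{12}, V_{23}, V_{31} are pairwise disjoint singletons, in which case the triangle is a T-clique. -/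
open SimpleGraph

variable {V : Type*} [Fintype V] [DecidableEq V]

/-- The set of vertices realizing a (potential) edge between two partitions. -/
def realizers (P Q : Multiset (Finset V)) : Set V :=
  {v : V | eraseVtx P v = eraseVtx Q v}


/-- `a` and `b` lie in a common part of `P`. -/
def SamePart (P : Multiset (Finset V)) (a b : V) : Prop :=
  ∃ s ∈ P, a ∈ s ∧ b ∈ s

lemma samePart_eraseVtx {P : Multiset (Finset V)} {x a b : V} (hxa : x ≠ a) (hxb : x ≠ b) :
    SamePart (eraseVtx P x) a b ↔ SamePart P a b := by
  constructor
  · rintro ⟨t, ht, hat, hbt⟩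
    obtain ⟨s, hs, rfl⟩ := Multiset.mem_map.1 ht
    exact ⟨s, hs, Finset.mem_of_mem_erase hat, Finset.mem_of_mem_erase hbt⟩
  · rintro ⟨s, hs, has, hbs⟩
    exact ⟨s.erase x, Multiset.mem_map_of_mem _ hs,
      Finset.mem_erase.2 ⟨hxa.symm, has⟩, Finset.mem_erase.2 ⟨hxb.symm, hbs⟩⟩

lemma samePart_transfer {P Q : Multiset (Finset V)} {x a b : V}
    (h : eraseVtx P x = eraseVtx Q x) (hxa : x ≠ a) (hxb : x ≠ b) :
    SamePart P a b ↔ SamePart Q a b := by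
  rw [← samePart_eraseVtx (P := P) hxa hxb, h, samePart_eraseVtx hxa hxb]

lemma card_filter_eq_count (P : Multiset (Finset V)) (a : V) :
    Multiset.card (P.filter (fun t => a ∈ t)) = Multiset.count a (P.map Finset.val).sum := by
  induction P using Multiset.induction_on with
  | empty => simp
  | cons s P ih =>
    rw [Multiset.filter_cons, Multiset.map_cons, Multiset.sum_cons, Multiset.count_add,
      Multiset.card_add, ih]
    congr 1
    by_cases h : a ∈ s
    · simp [h, Multiset.count_eq_one_of_mem s.nodup h]
    · simp [h, Multiset.count_eq_zero.2]

lemma exists_part {G : SimpleGraph V} {k : ℕ} {P : Multiset (Finset V)}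
    (hP : IsStablePartition G k P) (a : V) :
    ∃ s, a ∈ s ∧ P.filter (fun t => a ∈ t) = {s} := by
  have h1 : Multiset.card (P.filter (fun t => a ∈ t)) = 1 := by
    rw [card_filter_eq_count, hP.2.1]
    exact Multiset.count_univ a
  obtain ⟨s, hs⟩ := Multiset.card_eq_one.1 h1
  have hmem : s ∈ P.filter (fun t => a ∈ t) := by
    rw [hs]; exact Multiset.mem_singleton_self s
  exact ⟨s, (Multiset.mem_filter.1 hmem).2, hs⟩

lemma samePart_self {G : SimpleGraph V} {k : ℕ} {P : Multiset (Finset V)}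
    (hP : IsStablePartition G k P) (a : V) : SamePart P a a := by
  obtain ⟨s, has, hfil⟩ := exists_part hP a
  have hmem : s ∈ P.filter (fun t => a ∈ t) := by
    rw [hfil]; exact Multiset.mem_singleton_self s
  exact ⟨s, (Multiset.mem_filter.1 hmem).1, has, has⟩

lemma part_eq {G : SimpleGraph V} {k : ℕ} {P : Multiset (Finset V)}
    (hP : IsStablePartition G k P) {a : V} {s t : Finset V}
    (hs : s ∈ P) (ht : t ∈ P) (has : a ∈ s) (hat : a ∈ t) : s = t := by
  obtain ⟨u, _, hfil⟩ := exists_part hP a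
  have h1 : s ∈ P.filter (fun t => a ∈ t) := Multiset.mem_filter.2 ⟨hs, has⟩
  have h2 : t ∈ P.filter (fun t => a ∈ t) := Multiset.mem_filter.2 ⟨ht, hat⟩
  rw [hfil, Multiset.mem_singleton] at h1 h2
  rw [h1, h2]

lemma count_part {G : SimpleGraph V} {k : ℕ} {P : Multiset (Finset V)}
    (hP : IsStablePartition G k P) {a : V} {s : Finset V}
    (hs : s ∈ P) (has : a ∈ s) : Multiset.count s P = 1 := by
  obtain ⟨u, hau, hfil⟩ := exists_part hP a
  have hc : Multiset.count s (P.filter (fun t => a ∈ t)) = Multiset.count s P := by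
    rw [Multiset.count_filter, if_pos has]
  rw [hfil, Multiset.count_singleton] at hc
  have hmemu : u ∈ P := by
    have : u ∈ P.filter (fun t => a ∈ t) := by
      rw [hfil]; exact Multiset.mem_singleton_self u
    exact (Multiset.mem_filter.1 this).1
  have hsu : s = u := part_eq hP hs hmemu has hau
  rw [← hc, if_pos hsu]

lemma mem_of_samePart {G : SimpleGraph V} {k : ℕ} {P Q : Multiset (Finset V)}
    (hP : IsStablePartition G k P) (hQ : IsStablePartition G k Q)
    (h : ∀ a b, SamePart P a b ↔ SamePart Q a b) {s : Finset V}
    (hsne : s.Nonempty) (hsP : s ∈ P) : s ∈ Q := by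
  obtain ⟨a, ha⟩ := hsne
  obtain ⟨t, htQ, hat, -⟩ := (h a a).1 ⟨s, hsP, ha, ha⟩
  have hst : s = t := by
    ext b
    constructor
    · intro hbs
      obtain ⟨t', ht', hat', hbt'⟩ := (h a b).1 ⟨s, hsP, ha, hbs⟩
      rwa [part_eq hQ ht' htQ hat' hat] at hbt'
    · intro hbt
      obtain ⟨s', hs', has', hbs'⟩ := (h a b).2 ⟨t, htQ, hat, hbt⟩
      rwa [part_eq hP hs' hsP has' ha] at hbs'
  rwa [hst]

lemma stable_ext {G : SimpleGraph V} {k : ℕ} {P Q : Multiset (Finset V)}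
    (hP : IsStablePartition G k P) (hQ : IsStablePartition G k Q)
    (h : ∀ a b, SamePart P a b ↔ SamePart Q a b) : P = Q := by
  have hcount : ∀ s : Finset V, s ≠ ∅ → Multiset.count s P = Multiset.count s Q := by
    intro s hs
    have hs' : s.Nonempty := Finset.nonempty_iff_ne_empty.2 hs
    by_cases hsp : s ∈ P
    · obtain ⟨a, ha⟩ := hs'
      rw [count_part hP hsp ha,
        count_part hQ (mem_of_samePart hP hQ h ⟨a, ha⟩ hsp) ha]
    · have hsq : s ∉ Q := fun hq =>
        hsp (mem_of_samePart hQ hP (fun a b => (h a b).symm) hs' hq)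
      rw [Multiset.count_eq_zero.2 hsp, Multiset.count_eq_zero.2 hsq]
  have hfil : P.filter (fun s => ¬ (∅ : Finset V) = s) = Q.filter (fun s => ¬ (∅ : Finset V) = s) := by
    refine Multiset.ext.2 fun s => ?_
    rw [Multiset.count_filter, Multiset.count_filter]
    by_cases hs : (∅ : Finset V) = s
    · simp [hs]
    · simp only [hs, not_false_iff, if_pos, if_true]
      exact hcount s (fun h => hs h.symm)
  have hsplit : ∀ R : Multiset (Finset V),
      Multiset.count (∅ : Finset V) R + Multiset.card (R.filter (fun s => ¬ (∅ : Finset V) = s))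
        = Multiset.card R := by
    intro R
    conv_rhs => rw [← Multiset.filter_add_not (fun s => (∅ : Finset V) = s) R]
    rw [Multiset.card_add]
    congr 1
    exact Multiset.count_eq_card_filter_eq R ∅
  have hempty : Multiset.count (∅ : Finset V) P = Multiset.count (∅ : Finset V) Q := by
    have h1 := hsplit P
    have h2 := hsplit Q
    rw [hP.1] at h1
    rw [hQ.1] at h2
    rw [hfil] at h1
    omega
  refine Multiset.ext.2 fun s => ?_
  by_cases hs : s = ∅
  · rw [hs]; exact hempty
  · exact hcount s hs

lemma samePart_flip {G : SimpleGraph V} {k : ℕ} {P Q : Multiset (Finset V)}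
    (hP : IsStablePartition G k P) (hQ : IsStablePartition G k Q) (hne : P ≠ Q)
    {v w : V} (hvw : v ≠ w)
    (hv : eraseVtx P v = eraseVtx Q v) (hw : eraseVtx P w = eraseVtx Q w) :
    ¬ (SamePart P v w ↔ SamePart Q v w) := by
  intro hiff
  apply hne
  apply stable_ext hP hQ
  intro a b
  by_cases hbv : b = v
  · rw [hbv]
    by_cases hav : a = v
    · rw [hav]
      exact iff_of_true (samePart_self hP v) (samePart_self hQ v)
    · by_cases haw : a = w
      · rw [haw]
        constructor
        · rintro ⟨s, hs, h1, h2⟩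
          obtain ⟨t, ht, h1', h2'⟩ := hiff.1 ⟨s, hs, h2, h1⟩
          exact ⟨t, ht, h2', h1'⟩
        · rintro ⟨s, hs, h1, h2⟩
          obtain ⟨t, ht, h1', h2'⟩ := hiff.2 ⟨s, hs, h2, h1⟩
          exact ⟨t, ht, h2', h1'⟩
      · exact samePart_transfer hw (fun h => haw h.symm) (fun h => hvw h.symm)
  · by_cases hbw : b = w
    · rw [hbw]
      by_cases hav : a = v
      · rw [hav]; exact hiff
      · by_cases haw : a = w
        · rw [haw]
          exact iff_of_true (samePart_self hP w) (samePart_self hQ w)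
        · exact samePart_transfer hv (fun h => hav h.symm) hvw
    · by_cases hav : a = v
      · subst hav
        exact samePart_transfer hw (fun h => hvw h.symm) (fun h => hbw h.symm)
      · exact samePart_transfer hv (fun h => hav h.symm) (fun h => hbv h.symm)

lemma no_two_realizers {G : SimpleGraph V} {k : ℕ} {A B C : Multiset (Finset V)}
    (hA : IsStablePartition G k A) (hB : IsStablePartition G k B) (hAB : A ≠ B)
    {v w x y : V} (hvw : v ≠ w)
    (hv : eraseVtx A v = eraseVtx B v) (hw : eraseVtx A w = eraseVtx B w)
    (hx : eraseVtx B x = eraseVtx C x) (hy : eraseVtx C y = eraseVtx A y)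
    (hxv : x ≠ v) (hxw : x ≠ w) (hyv : y ≠ v) (hyw : y ≠ w) : False :=
  samePart_flip hA hB hAB hvw hv hw
    (((samePart_transfer hy hyv hyw).symm).trans ((samePart_transfer hx hxv hxw).symm))

/-- **Triangle realizers.** For a triangle `{P₁, P₂, P₃}` in `B_k(G)` with
`V_{ij}` the set of vertices realizing the edge `P_iP_j`, exactly one of the
following holds: (1) `V₁₂ ∩ V₂₃ ∩ V₃₁ ≠ ∅`, in which case the triangle is an
S-clique (it has a common anchor); or (2) the sets `V₁₂, V₂₃, V₃₁` are pairwise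
disjoint singletons, in which case the triangle is a T-clique (no anchor). -/
theorem triangle_realizers (G : SimpleGraph V) (k : ℕ)
    (P₁ P₂ P₃ : {P : Multiset (Finset V) // IsStablePartition G k P})
    (h12 : (bellGraph G k).Adj P₁ P₂) (h23 : (bellGraph G k).Adj P₂ P₃)
    (h31 : (bellGraph G k).Adj P₃ P₁) :
    Xor'
      ((realizers P₁.1 P₂.1 ∩ realizers P₂.1 P₃.1 ∩ realizers P₃.1 P₁.1).Nonempty)
      ((∃ v : V, realizers P₁.1 P₂.1 = {v}) ∧ (∃ v : V, realizers P₂.1 P₃.1 = {v}) ∧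
        (∃ v : V, realizers P₃.1 P₁.1 = {v}) ∧
        Disjoint (realizers P₁.1 P₂.1) (realizers P₂.1 P₃.1) ∧
        Disjoint (realizers P₂.1 P₃.1) (realizers P₃.1 P₁.1) ∧
        Disjoint (realizers P₁.1 P₂.1) (realizers P₃.1 P₁.1)) ∧
    ((realizers P₁.1 P₂.1 ∩ realizers P₂.1 P₃.1 ∩ realizers P₃.1 P₁.1).Nonempty →
      ∃ u : V, eraseVtx P₁.1 u = eraseVtx P₂.1 u ∧ eraseVtx P₂.1 u = eraseVtx P₃.1 u ∧
        eraseVtx P₃.1 u = eraseVtx P₁.1 u) ∧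
    (((∃ v : V, realizers P₁.1 P₂.1 = {v}) ∧ (∃ v : V, realizers P₂.1 P₃.1 = {v}) ∧
        (∃ v : V, realizers P₃.1 P₁.1 = {v}) ∧
        Disjoint (realizers P₁.1 P₂.1) (realizers P₂.1 P₃.1) ∧
        Disjoint (realizers P₂.1 P₃.1) (realizers P₃.1 P₁.1) ∧
        Disjoint (realizers P₁.1 P₂.1) (realizers P₃.1 P₁.1)) →
      ¬ ∃ u : V, eraseVtx P₁.1 u = eraseVtx P₂.1 u ∧ eraseVtx P₂.1 u = eraseVtx P₃.1 u ∧
        eraseVtx P₃.1 u = eraseVtx P₁.1 u) := by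
  obtain ⟨hne12, v12, hv12⟩ := h12
  obtain ⟨hne23, v23, hv23⟩ := h23
  obtain ⟨hne31, v31, hv31⟩ := h31
  have hne12' : P₁.1 ≠ P₂.1 := fun h => hne12 (Subtype.ext h)
  have hne23' : P₂.1 ≠ P₃.1 := fun h => hne23 (Subtype.ext h)
  have hne31' : P₃.1 ≠ P₁.1 := fun h => hne31 (Subtype.ext h)
  have hm12 : v12 ∈ realizers P₁.1 P₂.1 := hv12
  have hm23 : v23 ∈ realizers P₂.1 P₃.1 := hv23
  have hm31 : v31 ∈ realizers P₃.1 P₁.1 := hv31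
  -- any vertex realizing two of the edges realizes all three
  have tri12 : ∀ u : V, u ∈ realizers P₁.1 P₂.1 → u ∈ realizers P₂.1 P₃.1 →
      u ∈ realizers P₁.1 P₂.1 ∩ realizers P₂.1 P₃.1 ∩ realizers P₃.1 P₁.1 := by
    intro u h1 h2
    have h1' : eraseVtx P₁.1 u = eraseVtx P₂.1 u := h1
    have h2' : eraseVtx P₂.1 u = eraseVtx P₃.1 u := h2
    exact ⟨⟨h1, h2⟩, (h2'.symm.trans h1'.symm : eraseVtx P₃.1 u = eraseVtx P₁.1 u)⟩
  have tri23 : ∀ u : V, u ∈ realizers P₂.1 P₃.1 → u ∈ realizers P₃.1 P₁.1 →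
      u ∈ realizers P₁.1 P₂.1 ∩ realizers P₂.1 P₃.1 ∩ realizers P₃.1 P₁.1 := by
    intro u h2 h3
    have h2' : eraseVtx P₂.1 u = eraseVtx P₃.1 u := h2
    have h3' : eraseVtx P₃.1 u = eraseVtx P₁.1 u := h3
    exact ⟨⟨(h2'.trans h3').symm, h2⟩, h3⟩
  have tri31 : ∀ u : V, u ∈ realizers P₁.1 P₂.1 → u ∈ realizers P₃.1 P₁.1 →
      u ∈ realizers P₁.1 P₂.1 ∩ realizers P₂.1 P₃.1 ∩ realizers P₃.1 P₁.1 := by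
    intro u h1 h3
    have h1' : eraseVtx P₁.1 u = eraseVtx P₂.1 u := h1
    have h3' : eraseVtx P₃.1 u = eraseVtx P₁.1 u := h3
    exact ⟨⟨h1, (h1'.symm.trans h3'.symm : eraseVtx P₂.1 u = eraseVtx P₃.1 u)⟩, h3⟩
  refine ⟨?_, ?_, ?_⟩
  · -- the Xor'
    by_cases hA : (realizers P₁.1 P₂.1 ∩ realizers P₂.1 P₃.1 ∩ realizers P₃.1 P₁.1).Nonempty
    · left
      refine ⟨hA, ?_⟩
      rintro ⟨-, -, -, d12, -, -⟩
      obtain ⟨u, ⟨hu1, hu2⟩, -⟩ := hA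
      exact Set.disjoint_left.1 d12 hu1 hu2
    · right
      refine ⟨⟨?_, ?_, ?_, ?_, ?_, ?_⟩, hA⟩
      · -- realizers P₁ P₂ is a singleton
        refine ⟨v12, Set.eq_singleton_iff_unique_mem.2 ⟨hm12, fun w hw => ?_⟩⟩
        by_contra hwne
        have hx1 : v23 ≠ v12 := fun h => hA ⟨v23, tri12 v23 (h ▸ hm12) hm23⟩
        have hx2 : v23 ≠ w := fun h => hA ⟨v23, tri12 v23 (h ▸ hw) hm23⟩
        have hy1 : v31 ≠ v12 := fun h => hA ⟨v31, tri31 v31 (h ▸ hm12) hm31⟩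
        have hy2 : v31 ≠ w := fun h => hA ⟨v31, tri31 v31 (h ▸ hw) hm31⟩
        exact no_two_realizers P₁.2 P₂.2 hne12' (fun h => hwne h.symm) hv12 hw hv23 hv31
          hx1 hx2 hy1 hy2
      · -- realizers P₂ P₃ is a singleton
        refine ⟨v23, Set.eq_singleton_iff_unique_mem.2 ⟨hm23, fun w hw => ?_⟩⟩
        by_contra hwne
        have hx1 : v31 ≠ v23 := fun h => hA ⟨v31, tri23 v31 (h ▸ hm23) hm31⟩
        have hx2 : v31 ≠ w := fun h => hA ⟨v31, tri23 v31 (h ▸ hw) hm31⟩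
        have hy1 : v12 ≠ v23 := fun h => hA ⟨v12, tri12 v12 hm12 (h ▸ hm23)⟩
        have hy2 : v12 ≠ w := fun h => hA ⟨v12, tri12 v12 hm12 (h ▸ hw)⟩
        exact no_two_realizers P₂.2 P₃.2 hne23' (fun h => hwne h.symm) hv23 hw hv31 hv12
          hx1 hx2 hy1 hy2
      · -- realizers P₃ P₁ is a singleton
        refine ⟨v31, Set.eq_singleton_iff_unique_mem.2 ⟨hm31, fun w hw => ?_⟩⟩
        by_contra hwne
        have hx1 : v12 ≠ v31 := fun h => hA ⟨v12, tri31 v12 hm12 (h ▸ hm31)⟩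
        have hx2 : v12 ≠ w := fun h => hA ⟨v12, tri31 v12 hm12 (h ▸ hw)⟩
        have hy1 : v23 ≠ v31 := fun h => hA ⟨v23, tri23 v23 hm23 (h ▸ hm31)⟩
        have hy2 : v23 ≠ w := fun h => hA ⟨v23, tri23 v23 hm23 (h ▸ hw)⟩
        exact no_two_realizers P₃.2 P₁.2 hne31' (fun h => hwne h.symm) hv31 hw hv12 hv23
          hx1 hx2 hy1 hy2
      · exact Set.disjoint_left.2 fun u h1 h2 => hA ⟨u, tri12 u h1 h2⟩
      · exact Set.disjoint_left.2 fun u h2 h3 => hA ⟨u, tri23 u h2 h3⟩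
      · exact Set.disjoint_left.2 fun u h1 h3 => hA ⟨u, tri31 u h1 h3⟩
  · rintro ⟨u, ⟨hu1, hu2⟩, hu3⟩
    exact ⟨u, hu1, hu2, hu3⟩
  · rintro ⟨-, -, -, d12, -, -⟩ ⟨u, h1, h2, -⟩
    exact Set.disjoint_left.1 d12 h1 h2
end

section
/- Let G be a finite simple graph, k ∈ ℕ, and let {P_1, P_2, P_3} be a T-triangle in B_k(G) whose edges are realized by the three distinct vertices v_1, v_2, v_3. Let W = V(G) \ {v_1, v_2, v_3}, and let R be the common restriction of P_1, P_2, P_3 to W. If P is any vertex of B_k(G) adjacent to each of P_1, P_2, P_3, then the restriction of P to W equals R. -/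
open SimpleGraph

set_option linter.unusedSectionVars false

variable {V : Type*} [Fintype V] [DecidableEq V]

/-- The restriction of a partition to a set `W` of vertices: the multiset of
intersections of its parts with `W`. -/
def restrictParts (P : Multiset (Finset V)) (W : Finset V) : Multiset (Finset V) :=
  P.map (fun s => s ∩ W)

namespace TTri

def resOff (S : Finset V) (A : Multiset (Finset V)) : Multiset (Finset V) :=
  A.map (fun s => s \ S)

def Cov (A : Multiset (Finset V)) : Prop :=
  (A.map Finset.val).sum = (Finset.univ : Finset V).val

lemma eraseVtx_eq_resOff (A : Multiset (Finset V)) (v : V) :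
    eraseVtx A v = resOff {v} A := by
  unfold eraseVtx resOff
  apply Multiset.map_congr rfl
  intro s _
  rw [Finset.erase_eq]

lemma restrict_eq_resOff (A : Multiset (Finset V)) (S : Finset V) :
    restrictParts A (Finset.univ \ S) = resOff S A := by
  unfold restrictParts resOff
  apply Multiset.map_congr rfl
  intro s _
  ext x
  simp [Finset.mem_sdiff, Finset.mem_inter]

lemma resOff_mono {A B : Multiset (Finset V)} {S T : Finset V} (hST : S ⊆ T)
    (h : resOff S A = resOff S B) : resOff T A = resOff T B := by
  have key : ∀ M : Multiset (Finset V),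
      resOff T M = (resOff S M).map (fun s => s \ T) := by
    intro M
    unfold resOff
    rw [Multiset.map_map]
    apply Multiset.map_congr rfl
    intro s _
    simp only [Function.comp_apply]
    ext x
    have hx : x ∈ S → x ∈ T := fun hh => hST hh
    simp only [Finset.mem_sdiff]
    tauto
  rw [key A, key B, h]

lemma card_filter {A : Multiset (Finset V)} (hA : Cov A) (v : V) :
    Multiset.card (A.filter (fun s => v ∈ s)) = 1 := by
  have h1 : ∀ M : Multiset (Finset V),
      Multiset.card (M.filter (fun s => v ∈ s)) = ((M.map Finset.val).sum).count v := by
    intro M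
    induction M using Multiset.induction with
    | empty => simp
    | cons a s ih =>
      rw [Multiset.filter_cons, Multiset.map_cons, Multiset.sum_cons, Multiset.count_add,
        Multiset.card_add]
      by_cases h : v ∈ a
      · rw [if_pos h, Multiset.count_eq_one_of_mem a.nodup h]
        simp [ih]
      · rw [if_neg h, Multiset.count_eq_zero_of_notMem (by simpa using h)]
        simp [ih]
  rw [h1, hA, Multiset.count_eq_one_of_mem Finset.univ.nodup (Finset.mem_univ v)]

lemma filter_eq {A : Multiset (Finset V)} {s : Finset V} {rest : Multiset (Finset V)} {v : V}
    (hA : Cov A) (hdec : A = s ::ₘ rest) (hv : v ∈ s) :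
    A.filter (fun t => v ∈ t) = {s} ∧ ∀ t ∈ rest, v ∉ t := by
  have hc := card_filter hA v
  rw [hdec, Multiset.filter_cons, if_pos hv] at hc
  rw [Multiset.card_add] at hc
  simp only [Multiset.card_singleton] at hc
  have h0 : Multiset.card (rest.filter (fun t => v ∈ t)) = 0 := by omega
  have hnil : rest.filter (fun t => v ∈ t) = 0 := Multiset.card_eq_zero.mp h0
  constructor
  · rw [hdec, Multiset.filter_cons, if_pos hv, hnil]; simp
  · exact fun t ht hvt => (Multiset.filter_eq_nil.mp hnil t ht) hvt

lemma partOf_exists {A : Multiset (Finset V)} (hA : Cov A) (v : V) :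
    ∃ s rest, A = s ::ₘ rest ∧ v ∈ s := by
  obtain ⟨s, hs⟩ := Multiset.card_eq_one.mp (card_filter hA v)
  have hmem : s ∈ A.filter (fun t => v ∈ t) := hs ▸ Multiset.mem_singleton_self s
  have hsA : s ∈ A := (Multiset.mem_filter.mp hmem).1
  have hv : v ∈ s := (Multiset.mem_filter.mp hmem).2
  exact ⟨s, A.erase s, (Multiset.cons_erase hsA).symm, hv⟩

lemma partCongr {A B : Multiset (Finset V)} {S : Finset V} {v : V}
    {pA pB : Finset V} {A' B' : Multiset (Finset V)}
    (hA : Cov A) (hB : Cov B) (h : resOff S A = resOff S B) (hv : v ∉ S)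
    (hdA : A = pA ::ₘ A') (hvA : v ∈ pA) (hdB : B = pB ::ₘ B') (hvB : v ∈ pB) :
    pA \ S = pB \ S := by
  have key : ∀ (M : Multiset (Finset V)) (p : Finset V) (rest : Multiset (Finset V)),
      Cov M → M = p ::ₘ rest → v ∈ p →
      (resOff S M).filter (fun t => v ∈ t) = {p \ S} := by
    intro M p rest hM hd hp
    have hrest := (filter_eq hM hd hp).2
    rw [hd]
    unfold resOff
    rw [Multiset.map_cons, Multiset.filter_cons,
      if_pos (Finset.mem_sdiff.mpr ⟨hp, hv⟩)]
    have hz : (rest.map (fun s => s \ S)).filter (fun t => v ∈ t) = 0 := by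
      rw [Multiset.filter_eq_nil]
      intro t ht
      obtain ⟨t', ht', rfl⟩ := Multiset.mem_map.mp ht
      intro hvt
      exact hrest t' ht' (Finset.mem_sdiff.mp hvt).1
    rw [hz]
    simp
  have e1 := key A pA A' hA hdA hvA
  have e2 := key B pB B' hB hdB hvB
  rw [h, e2] at e1
  exact (Multiset.singleton_inj.mp e1).symm

lemma moveDecomp {A B : Multiset (Finset V)} {u : V}
    (hA : Cov A) (hB : Cov B) (h : eraseVtx A u = eraseVtx B u) (hne : A ≠ B) :
    ∃ a b C, u ∈ a ∧ u ∈ b ∧ a.erase u ≠ b.erase u ∧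
      A = a ::ₘ (b.erase u) ::ₘ C ∧ B = b ::ₘ (a.erase u) ::ₘ C := by
  obtain ⟨a, A', hdA, hva⟩ := partOf_exists hA u
  obtain ⟨b, B', hdB, hvb⟩ := partOf_exists hB u
  have hA' := (filter_eq hA hdA hva).2
  have hB' := (filter_eq hB hdB hvb).2
  have hmapA : A'.map (fun s => s.erase u) = A' := by
    rw [Multiset.map_congr rfl (fun s hs => Finset.erase_eq_of_notMem (hA' s hs))]
    exact Multiset.map_id A'
  have hmapB : B'.map (fun s => s.erase u) = B' := by
    rw [Multiset.map_congr rfl (fun s hs => Finset.erase_eq_of_notMem (hB' s hs))]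
    exact Multiset.map_id B'
  have he : (a.erase u) ::ₘ A' = (b.erase u) ::ₘ B' := by
    have h' := h
    rw [hdA, hdB] at h'
    unfold eraseVtx at h'
    rwa [Multiset.map_cons, Multiset.map_cons, hmapA, hmapB] at h'
  rcases Multiset.cons_eq_cons.mp he with ⟨h1, h2⟩ | ⟨hne', cs, h1, h2⟩
  · exfalso
    apply hne
    have hab : a = b := by
      rw [← Finset.insert_erase hva, ← Finset.insert_erase hvb, h1]
    rw [hdA, hdB, hab, h2]
  · exact ⟨a, b, cs, hva, hvb, hne', by rw [hdA, h1], by rw [hdB, h2]⟩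

lemma distinctMovers {A B : Multiset (Finset V)} {u : V} {S T : Finset V}
    (hA : Cov A) (hB : Cov B) (h : eraseVtx A u = eraseVtx B u) (hne : A ≠ B)
    (hS : resOff S A = resOff S B) (hT : resOff T A = resOff T B)
    (huS : u ∉ S) (huT : u ∉ T) (hd : ∀ x, x ∈ S → x ∉ T) : False := by
  obtain ⟨a, b, C, hua, hub, hne', hdA, hdB⟩ := moveDecomp hA hB h hne
  have h1 : a \ S = b \ S := partCongr hA hB hS huS hdA hua hdB hub
  have h2 : a \ T = b \ T := partCongr hA hB hT huT hdA hua hdB hub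
  apply hne'
  have hab : a = b := by
    ext x
    by_cases hx : x ∈ S
    · have hx' : x ∉ T := hd x hx
      have h3 := Finset.ext_iff.mp h2 x
      simp only [Finset.mem_sdiff, hx'] at h3
      tauto
    · have h3 := Finset.ext_iff.mp h1 x
      simp only [Finset.mem_sdiff, hx] at h3
      tauto
  rw [hab]

lemma RM_aux (Q Q₁ Q₂ Q₃ : Multiset (Finset V))
    (hQ : Cov Q) (hQ₁ : Cov Q₁) (hQ₂ : Cov Q₂) (hQ₃ : Cov Q₃)
    (u w x y : V)
    (e₂ : eraseVtx Q u = eraseVtx Q₂ u) (n₂ : Q ≠ Q₂)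
    (e₃ : eraseVtx Q u = eraseVtx Q₃ u) (n₃ : Q ≠ Q₃)
    (ew : eraseVtx Q₂ w = eraseVtx Q₃ w) (n₂₃ : Q₂ ≠ Q₃)
    (ex : eraseVtx Q₁ x = eraseVtx Q₂ x)
    (ey : eraseVtx Q₁ y = eraseVtx Q₃ y)
    (huw : u ≠ w) (hux : u ≠ x) (huy : u ≠ y) (hwx : w ≠ x) (hwy : w ≠ y)
    (hwQ₂ : ∀ s, s ∈ Multiset.filter (fun t => u ∈ t) Q₂ → w ∈ s) : False := by
  obtain ⟨a, b, C, hua, hub, hne₂, hdQa, hdQ₂⟩ := moveDecomp hQ hQ₂ e₂ n₂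
  obtain ⟨a', b', C', hua', hub', hne₃, hdQa', hdQ₃⟩ := moveDecomp hQ hQ₃ e₃ n₃
  have haa : a = a' := by
    have f1 := (filter_eq hQ hdQa hua).1
    have f2 := (filter_eq hQ hdQa' hua').1
    rw [f1] at f2
    exact Multiset.singleton_inj.mp f2
  subst haa
  -- w belongs to the u-part of Q₂, which is b
  have hwb : w ∈ b := by
    apply hwQ₂ b
    rw [(filter_eq hQ₂ hdQ₂ hub).1]
    exact Multiset.mem_singleton_self b
  -- b \ {w} = b' \ {w}
  have hbw : b \ {w} = b' \ {w} := by
    refine partCongr hQ₂ hQ₃ ?_ (by simp [huw]) hdQ₂ hub hdQ₃ hub'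
    rw [← eraseVtx_eq_resOff, ← eraseVtx_eq_resOff]
    exact ew
  -- b ≠ b'
  have hbb : b ≠ b' := by
    rintro rfl
    apply n₂₃
    have hCC : C = C' := by
      have hq := hdQa.symm.trans hdQa'
      rw [Multiset.cons_inj_right, Multiset.cons_inj_right] at hq
      exact hq
    rw [hdQ₂, hdQ₃, hCC]
  -- w ∉ b'
  have hwb' : w ∉ b' := by
    intro hw'
    apply hbb
    ext z
    by_cases hz : z = w
    · subst hz; simp [hwb, hw']
    · have h3 := Finset.ext_iff.mp hbw z
      simp only [Finset.mem_sdiff, Finset.mem_singleton, hz] at h3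
      tauto
  -- w ∈ b.erase u
  have hwbu : w ∈ b.erase u := Finset.mem_erase.mpr ⟨Ne.symm huw, hwb⟩
  -- b.erase u = {w}
  have hbu : b.erase u = {w} := by
    refine Finset.Subset.antisymm ?_ (Finset.singleton_subset_iff.mpr hwbu)
    intro z hz
    rw [Finset.mem_singleton]
    by_contra hzw
    have hz' : z ∈ b'.erase u := by
      have hzb : z ∈ b := (Finset.mem_erase.mp hz).2
      have hzu : z ≠ u := (Finset.mem_erase.mp hz).1
      have hzb' : z ∈ b' := by
        have h3 := Finset.ext_iff.mp hbw z
        simp only [Finset.mem_sdiff, Finset.mem_singleton, hzw] at h3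
        tauto
      exact Finset.mem_erase.mpr ⟨hzu, hzb'⟩
    have f1 := (filter_eq hQ (by rw [hdQa, Multiset.cons_swap]) hz).1
    have f2 := (filter_eq hQ (by rw [hdQa', Multiset.cons_swap]) hz').1
    rw [f1] at f2
    have hbe : b.erase u = b'.erase u := Multiset.singleton_inj.mp f2
    rw [hbe] at hwbu
    exact hwb' (Finset.mem_erase.mp hwbu).2
  -- b'.erase u = ∅
  have hbu' : b'.erase u = ∅ := by
    ext z
    simp only [Finset.mem_erase, Finset.notMem_empty, iff_false]
    rintro ⟨hzu, hzb'⟩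
    have hzb : z ∈ b := by
      by_cases hzw : z = w
      · subst hzw; exact absurd hzb' hwb'
      · have h3 := Finset.ext_iff.mp hbw z
        simp only [Finset.mem_sdiff, Finset.mem_singleton, hzw] at h3
        tauto
    have : z ∈ b.erase u := Finset.mem_erase.mpr ⟨hzu, hzb⟩
    rw [hbu, Finset.mem_singleton] at this
    subst this
    exact hwb' hzb'
  -- facts about w-parts
  have hfa := filter_eq hQ (by rw [hdQa, Multiset.cons_swap]) hwbu
  have hwa : w ∉ a := hfa.2 a (Multiset.mem_cons_self a C)
  -- {w} ∈ C'
  have hwC' : ({w} : Finset V) ∈ C' := by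
    have hmem : (b.erase u) ∈ Q := by
      rw [hdQa]; exact Multiset.mem_cons_of_mem (Multiset.mem_cons_self _ _)
    rw [hbu] at hmem
    rw [hdQa', hbu'] at hmem
    rcases Multiset.mem_cons.mp hmem with h | h
    · exact absurd (h ▸ Finset.mem_singleton_self w) hwa
    · rcases Multiset.mem_cons.mp h with h' | h'
      · exact absurd h' (Finset.singleton_ne_empty w)
      · exact h'
  have hwQ₃mem : ({w} : Finset V) ∈ Q₃ := by
    rw [hdQ₃]
    exact Multiset.mem_cons_of_mem (Multiset.mem_cons_of_mem hwC')
  have hdQ₃w : Q₃ = ({w} : Finset V) ::ₘ Q₃.erase {w} := (Multiset.cons_erase hwQ₃mem).symm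
  -- Q₁'s w-part
  obtain ⟨p, rest, hdp, hwp⟩ := partOf_exists hQ₁ w
  have h1 : p \ {x} = b \ {x} := by
    refine partCongr hQ₁ hQ₂ ?_ (by simp [hwx]) hdp hwp hdQ₂ hwb
    rw [← eraseVtx_eq_resOff, ← eraseVtx_eq_resOff]
    exact ex
  have h2 : p \ {y} = {w} \ {y} := by
    refine partCongr hQ₁ hQ₃ ?_ (by simp [hwy]) hdp hwp hdQ₃w (Finset.mem_singleton_self w)
    rw [← eraseVtx_eq_resOff, ← eraseVtx_eq_resOff]
    exact ey
  have hup : u ∈ p := by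
    have h3 := Finset.ext_iff.mp h1 u
    simp only [Finset.mem_sdiff, Finset.mem_singleton, hux] at h3
    tauto
  have h4 := Finset.ext_iff.mp h2 u
  simp only [Finset.mem_sdiff, Finset.mem_singleton, hux, huy, hup] at h4
  exact huw (by tauto)

lemma RM (Q Q₁ Q₂ Q₃ : Multiset (Finset V))
    (hQ : Cov Q) (hQ₁ : Cov Q₁) (hQ₂ : Cov Q₂) (hQ₃ : Cov Q₃)
    (u w x y : V)
    (e₂ : eraseVtx Q u = eraseVtx Q₂ u) (n₂ : Q ≠ Q₂)
    (e₃ : eraseVtx Q u = eraseVtx Q₃ u) (n₃ : Q ≠ Q₃)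
    (ew : eraseVtx Q₂ w = eraseVtx Q₃ w) (n₂₃ : Q₂ ≠ Q₃)
    (ex : eraseVtx Q₁ x = eraseVtx Q₂ x)
    (ey : eraseVtx Q₁ y = eraseVtx Q₃ y)
    (huw : u ≠ w) (hux : u ≠ x) (huy : u ≠ y) (hwx : w ≠ x) (hwy : w ≠ y) : False := by
  obtain ⟨a, b, C, hua, hub, hne₂, hdQa, hdQ₂⟩ := moveDecomp hQ hQ₂ e₂ n₂
  obtain ⟨a', b', C', hua', hub', hne₃, hdQa', hdQ₃⟩ := moveDecomp hQ hQ₃ e₃ n₃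
  have haa : a = a' := by
    have f1 := (filter_eq hQ hdQa hua).1
    have f2 := (filter_eq hQ hdQa' hua').1
    rw [f1] at f2
    exact Multiset.singleton_inj.mp f2
  subst haa
  have hbb : b ≠ b' := by
    rintro rfl
    apply n₂₃
    have hCC : C = C' := by
      have hq := hdQa.symm.trans hdQa'
      rw [Multiset.cons_inj_right, Multiset.cons_inj_right] at hq
      exact hq
    rw [hdQ₂, hdQ₃, hCC]
  have hbw : b \ {w} = b' \ {w} := by
    refine partCongr hQ₂ hQ₃ ?_ (by simp [huw]) hdQ₂ hub hdQ₃ hub'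
    rw [← eraseVtx_eq_resOff, ← eraseVtx_eq_resOff]
    exact ew
  have hcase : w ∈ b ∨ w ∈ b' := by
    by_contra hc
    push_neg at hc
    apply hbb
    ext z
    by_cases hz : z = w
    · subst hz; simp [hc.1, hc.2]
    · have h3 := Finset.ext_iff.mp hbw z
      simp only [Finset.mem_sdiff, Finset.mem_singleton, hz] at h3
      tauto
  rcases hcase with h | h
  · refine RM_aux Q Q₁ Q₂ Q₃ hQ hQ₁ hQ₂ hQ₃ u w x y e₂ n₂ e₃ n₃ ew n₂₃ ex ey
      huw hux huy hwx hwy ?_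
    intro s hs
    rw [(filter_eq hQ₂ hdQ₂ hub).1, Multiset.mem_singleton] at hs
    rwa [hs]
  · refine RM_aux Q Q₁ Q₃ Q₂ hQ hQ₁ hQ₃ hQ₂ u w y x e₃ n₃ e₂ n₂ ew.symm
      (fun hh => n₂₃ hh.symm) ey ex huw huy hux hwy hwx ?_
    intro s hs
    rw [(filter_eq hQ₃ hdQ₃ hub').1, Multiset.mem_singleton] at hs
    rwa [hs]

end TTri


/-- **Rigidity of T-triangles.** Let `{P₁, P₂, P₃}` be a T-triangle in
`B_k(G)` whose edges are realized by distinct vertices `v₁, v₂, v₃` (with `vᵢ`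
realizing the edge not incident to `Pᵢ`), and let `W = V(G) \ {v₁, v₂, v₃}`.
If `P` is adjacent in `B_k(G)` to each of `P₁, P₂, P₃`, then the restriction of
`P` to `W` equals the common restriction `R` of the `Pᵢ` to `W`. -/
theorem TTriangle_fourth_vertex (G : SimpleGraph V) (k : ℕ)
    (P₁ P₂ P₃ : {P : Multiset (Finset V) // IsStablePartition G k P})
    (h12 : (bellGraph G k).Adj P₁ P₂) (h23 : (bellGraph G k).Adj P₂ P₃)
    (h31 : (bellGraph G k).Adj P₃ P₁)
    (v₁ v₂ v₃ : V) (h12' : v₁ ≠ v₂) (h13' : v₁ ≠ v₃) (h23' : v₂ ≠ v₃)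
    (hv₃ : eraseVtx P₁.1 v₃ = eraseVtx P₂.1 v₃)
    (hv₁ : eraseVtx P₂.1 v₁ = eraseVtx P₃.1 v₁)
    (hv₂ : eraseVtx P₃.1 v₂ = eraseVtx P₁.1 v₂)
    (hT : ¬ ∃ u : V, eraseVtx P₁.1 u = eraseVtx P₂.1 u ∧
        eraseVtx P₂.1 u = eraseVtx P₃.1 u ∧ eraseVtx P₃.1 u = eraseVtx P₁.1 u)
    (P : {P : Multiset (Finset V) // IsStablePartition G k P})
    (hP1 : (bellGraph G k).Adj P P₁) (hP2 : (bellGraph G k).Adj P P₂)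
    (hP3 : (bellGraph G k).Adj P P₃) :
    restrictParts P.1 (Finset.univ \ {v₁, v₂, v₃}) =
      restrictParts P₁.1 (Finset.univ \ {v₁, v₂, v₃}) := by
  obtain ⟨hne1, u₁, e1⟩ := hP1
  obtain ⟨hne2, u₂, e2⟩ := hP2
  obtain ⟨hne3, u₃, e3⟩ := hP3
  have hcP : TTri.Cov P.1 := P.2.2.1
  have hc1 : TTri.Cov P₁.1 := P₁.2.2.1
  have hc2 : TTri.Cov P₂.1 := P₂.2.2.1
  have hc3 : TTri.Cov P₃.1 := P₃.2.2.1
  have m1 : P.1 ≠ P₁.1 := fun h => hne1 (Subtype.ext h)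
  have m2 : P.1 ≠ P₂.1 := fun h => hne2 (Subtype.ext h)
  have m3 : P.1 ≠ P₃.1 := fun h => hne3 (Subtype.ext h)
  have m12 : P₁.1 ≠ P₂.1 := fun h => h12.1 (Subtype.ext h)
  have m23 : P₂.1 ≠ P₃.1 := fun h => h23.1 (Subtype.ext h)
  have m31 : P₃.1 ≠ P₁.1 := fun h => h31.1 (Subtype.ext h)
  rw [TTri.restrict_eq_resOff, TTri.restrict_eq_resOff]
  have hres : ∀ (A B : Multiset (Finset V)) (v : V), eraseVtx A v = eraseVtx B v →
      v ∈ ({v₁, v₂, v₃} : Finset V) →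
      TTri.resOff {v₁, v₂, v₃} A = TTri.resOff {v₁, v₂, v₃} B := by
    intro A B v hv hmem
    refine TTri.resOff_mono (Finset.singleton_subset_iff.mpr hmem) ?_
    rw [← TTri.eraseVtx_eq_resOff, ← TTri.eraseVtx_eq_resOff]
    exact hv
  have hv₃mem : v₃ ∈ ({v₁, v₂, v₃} : Finset V) := by simp
  have hv₂mem : v₂ ∈ ({v₁, v₂, v₃} : Finset V) := by simp
  by_cases hu1 : u₁ ∈ ({v₁, v₂, v₃} : Finset V)
  · exact hres _ _ _ e1 hu1
  by_cases hu2 : u₂ ∈ ({v₁, v₂, v₃} : Finset V)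
  · exact (hres _ _ _ e2 hu2).trans (hres _ _ _ hv₃.symm hv₃mem)
  by_cases hu3 : u₃ ∈ ({v₁, v₂, v₃} : Finset V)
  · exact (hres _ _ _ e3 hu3).trans (hres _ _ _ hv₂ hv₂mem)
  exfalso
  simp only [Finset.mem_insert, Finset.mem_singleton, not_or] at hu1 hu2 hu3
  obtain ⟨h11, h12v, h13v⟩ := hu1
  obtain ⟨h21, h22, h23v⟩ := hu2
  obtain ⟨h31v, h32, h33⟩ := hu3
  by_cases h23u : u₂ = u₃
  · exact TTri.RM P.1 P₁.1 P₂.1 P₃.1 hcP hc1 hc2 hc3 u₂ v₁ v₃ v₂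
      e2 m2 (by rw [h23u]; exact e3) m3 hv₁ m23 hv₃ hv₂.symm
      h21 h23v h22 h13' h12'
  by_cases h12u : u₁ = u₂
  · exact TTri.RM P.1 P₃.1 P₁.1 P₂.1 hcP hc3 hc1 hc2 u₁ v₃ v₂ v₁
      e1 m1 (by rw [h12u]; exact e2) m2 hv₃ m12 hv₂ hv₁.symm
      h13v h12v h11 h23'.symm h13'.symm
  by_cases h13u : u₁ = u₃
  · exact TTri.RM P.1 P₂.1 P₃.1 P₁.1 hcP hc2 hc3 hc1 u₁ v₂ v₁ v₃
      (by rw [h13u]; exact e3) m3 e1 m1 hv₂ m31 hv₁ hv₃.symm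
      h12v h11 h13v h12'.symm h23'
  · refine TTri.distinctMovers (u := u₁) (S := {u₂, v₃}) (T := {u₃, v₂})
      hcP hc1 e1 m1 ?_ ?_ ?_ ?_ ?_
    · have t1 : TTri.resOff {u₂, v₃} P.1 = TTri.resOff {u₂, v₃} P₂.1 :=
        TTri.resOff_mono (Finset.singleton_subset_iff.mpr
          (show u₂ ∈ ({u₂, v₃} : Finset V) by simp))
          (by rw [← TTri.eraseVtx_eq_resOff, ← TTri.eraseVtx_eq_resOff]; exact e2)
      have t2 : TTri.resOff {u₂, v₃} P₂.1 = TTri.resOff {u₂, v₃} P₁.1 :=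
        TTri.resOff_mono (Finset.singleton_subset_iff.mpr
          (show v₃ ∈ ({u₂, v₃} : Finset V) by simp))
          (by rw [← TTri.eraseVtx_eq_resOff, ← TTri.eraseVtx_eq_resOff]; exact hv₃.symm)
      exact t1.trans t2
    · have t1 : TTri.resOff {u₃, v₂} P.1 = TTri.resOff {u₃, v₂} P₃.1 :=
        TTri.resOff_mono (Finset.singleton_subset_iff.mpr
          (show u₃ ∈ ({u₃, v₂} : Finset V) by simp))
          (by rw [← TTri.eraseVtx_eq_resOff, ← TTri.eraseVtx_eq_resOff]; exact e3)
      have t2 : TTri.resOff {u₃, v₂} P₃.1 = TTri.resOff {u₃, v₂} P₁.1 :=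
        TTri.resOff_mono (Finset.singleton_subset_iff.mpr
          (show v₂ ∈ ({u₃, v₂} : Finset V) by simp))
          (by rw [← TTri.eraseVtx_eq_resOff, ← TTri.eraseVtx_eq_resOff]; exact hv₂)
      exact t1.trans t2
    · simp only [Finset.mem_insert, Finset.mem_singleton, not_or]
      exact ⟨h12u, h13v⟩
    · simp only [Finset.mem_insert, Finset.mem_singleton, not_or]
      exact ⟨h13u, h12v⟩
    · intro z hz
      simp only [Finset.mem_insert, Finset.mem_singleton, not_or] at hz ⊢
      rcases hz with rfl | rfl
      · exact ⟨h23u, h22⟩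
      · exact ⟨fun h => h33 h.symm, fun h => h23' h.symm⟩
end

section
/- Let G be a finite simple graph and k ∈ ℕ. For any clique K = {P_1, …, P_m} with m ≥ 1 in B_k(G), exactly one of the following holds: (1) K is a cyclic T-triangle; (2) K is a radial T-triangle; (3) K is a split T-tetrahedron; (4) K is a fused T-tetrahedron; or (5) K is an S-clique. -/
set_option linter.unusedSectionVars false
set_option maxHeartbeats 1000000


open SimpleGraph

variable {V : Type*} [Fintype V] [DecidableEq V]

/-- A cyclic T-triple of partitions. -/
def IsCyclicTTriple (P₁ P₂ P₃ : Multiset (Finset V)) : Prop :=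
  ∃ v₁ v₂ v₃ : V, v₁ ≠ v₂ ∧ v₁ ≠ v₃ ∧ v₂ ≠ v₃ ∧
    eraseVtx P₁ v₃ = eraseVtx P₂ v₃ ∧
    eraseVtx P₂ v₁ = eraseVtx P₃ v₁ ∧
    eraseVtx P₃ v₂ = eraseVtx P₁ v₂ ∧
    ({v₁} : Finset V) ∈ P₁ ∧ ({v₂} : Finset V) ∈ P₂ ∧ ({v₃} : Finset V) ∈ P₃

/-- A radial T-triple of partitions, with `P₁` containing the triple part. -/
def IsRadialTTriple (P₁ P₂ P₃ : Multiset (Finset V)) : Prop :=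
  ∃ v₁ v₂ v₃ : V, v₁ ≠ v₂ ∧ v₁ ≠ v₃ ∧ v₂ ≠ v₃ ∧
    eraseVtx P₁ v₃ = eraseVtx P₂ v₃ ∧
    eraseVtx P₂ v₁ = eraseVtx P₃ v₁ ∧
    eraseVtx P₃ v₂ = eraseVtx P₁ v₂ ∧
    ({v₁, v₂, v₃} : Finset V) ∈ P₁

variable (G : SimpleGraph V) (k : ℕ)

/-- An S-clique: a clique in `B_k(G)` admitting an anchor vertex realizing
every edge. -/
def IsSCliqueF (K : Finset {P : Multiset (Finset V) // IsStablePartition G k P}) : Prop :=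
  (bellGraph G k).IsClique (K : Set _) ∧
    ∃ u : V, ∀ P ∈ K, ∀ Q ∈ K, eraseVtx P.1 u = eraseVtx Q.1 u

/-- A T-triangle: a 3-clique in `B_k(G)` admitting no anchor. -/
def IsTTriangleF (K : Finset {P : Multiset (Finset V) // IsStablePartition G k P}) : Prop :=
  (bellGraph G k).IsClique (K : Set _) ∧ K.card = 3 ∧
    ¬ ∃ u : V, ∀ P ∈ K, ∀ Q ∈ K, eraseVtx P.1 u = eraseVtx Q.1 u

/-- A cyclic T-triangle in `B_k(G)`. -/
def IsCyclicTTriangleF (K : Finset {P : Multiset (Finset V) // IsStablePartition G k P}) :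
    Prop :=
  IsTTriangleF G k K ∧ ∃ P₁ P₂ P₃, K = {P₁, P₂, P₃} ∧ IsCyclicTTriple P₁.1 P₂.1 P₃.1

/-- A radial T-triangle in `B_k(G)`. -/
def IsRadialTTriangleF (K : Finset {P : Multiset (Finset V) // IsStablePartition G k P}) :
    Prop :=
  IsTTriangleF G k K ∧ ∃ P₁ P₂ P₃, K = {P₁, P₂, P₃} ∧ IsRadialTTriple P₁.1 P₂.1 P₃.1

/-- A fused T-tetrahedron: a 4-clique all four of whose triangles are
T-triangles. -/
def IsFusedTTetrahedronF (K : Finset {P : Multiset (Finset V) // IsStablePartition G k P}) :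
    Prop :=
  (bellGraph G k).IsClique (K : Set _) ∧ K.card = 4 ∧
    ∀ T ⊆ K, T.card = 3 → IsTTriangleF G k T

/-- A split T-tetrahedron: a 4-clique exactly three of whose triangles are
S-cliques and one of whose triangles is a T-triangle. -/
def IsSplitTTetrahedronF (K : Finset {P : Multiset (Finset V) // IsStablePartition G k P}) :
    Prop :=
  (bellGraph G k).IsClique (K : Set _) ∧ K.card = 4 ∧
    ∃ T ⊆ K, T.card = 3 ∧ IsTTriangleF G k T ∧
      ∀ T' ⊆ K, T'.card = 3 → T' ≠ T → IsSCliqueF G k T'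


namespace BellAux

/-- membership in a sum of multisets -/
lemma mem_msum {α : Type*} {a : α} {M : Multiset (Multiset α)} :
    a ∈ M.sum ↔ ∃ t ∈ M, a ∈ t := by
  induction M using Multiset.induction with
  | empty => simp
  | cons s M ih => simp [ih]

def relP (P : Multiset (Finset V)) (x y : V) : Prop := ∃ s ∈ P, x ∈ s ∧ y ∈ s

lemma relP_symm {P : Multiset (Finset V)} {x y : V} (h : relP P x y) : relP P y x := by
  obtain ⟨s, hs, hx, hy⟩ := h; exact ⟨s, hs, hy, hx⟩

lemma count_le_one_of_nodup {m : Multiset V} (hm : m.Nodup) (a : V) :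
    Multiset.count a m ≤ 1 := Multiset.nodup_iff_count_le_one.1 hm a

lemma part_unique {P : Multiset (Finset V)} {m : Multiset V} (hm : m.Nodup)
    (hsum : (P.map Finset.val).sum = m) {s t : Finset V} (hs : s ∈ P) (ht : t ∈ P)
    {x : V} (hxs : x ∈ s) (hxt : x ∈ t) : s = t := by
  by_contra hne
  have hP : s ::ₘ P.erase s = P := Multiset.cons_erase hs
  have ht' : t ∈ P.erase s :=
    (Multiset.mem_erase_of_ne (fun h => hne h.symm)).2 ht
  have hle : t.val ≤ ((P.erase s).map Finset.val).sum :=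
    Multiset.le_sum_of_mem (Multiset.mem_map_of_mem _ ht')
  have hsum2 : s.val + ((P.erase s).map Finset.val).sum = m := by
    rw [← hsum, ← hP]; simp
  have h1 : (1 : ℕ) ≤ Multiset.count x s.val := by
    exact (Multiset.one_le_count_iff_mem).2 hxs
  have h2 : (1 : ℕ) ≤ Multiset.count x t.val := by
    exact (Multiset.one_le_count_iff_mem).2 hxt
  have h2' : (1:ℕ) ≤ Multiset.count x ((P.erase s).map Finset.val).sum :=
    le_trans h2 (Multiset.le_iff_count.1 hle x)
  have : (2:ℕ) ≤ Multiset.count x m := by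
    rw [← hsum2, Multiset.count_add]; omega
  have := count_le_one_of_nodup hm x
  omega

lemma rel_trans' {P : Multiset (Finset V)} {m : Multiset V} (hm : m.Nodup)
    (hsum : (P.map Finset.val).sum = m) {x y z : V}
    (h1 : relP P x y) (h2 : relP P y z) : relP P x z := by
  obtain ⟨s, hs, hx, hy⟩ := h1
  obtain ⟨t, ht, hy', hz⟩ := h2
  exact ⟨s, hs, hx, by rwa [part_unique hm hsum hs ht hy hy']⟩

lemma rel_refl' {P : Multiset (Finset V)} {m : Multiset V}
    (hsum : (P.map Finset.val).sum = m) {x : V} (hx : x ∈ m) : relP P x x := by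
  rw [← hsum] at hx
  obtain ⟨sv, hsv, hx⟩ := mem_msum.1 hx
  obtain ⟨s, hs, rfl⟩ := Multiset.mem_map.1 hsv
  exact ⟨s, hs, hx, hx⟩

lemma relP_erase {P : Multiset (Finset V)} {m : Multiset V} (hm : m.Nodup)
    (hsum : (P.map Finset.val).sum = m) {A : Finset V} (hA : A ∈ P) (x y : V) :
    relP (P.erase A) x y ↔ (relP P x y ∧ x ∉ A ∧ y ∉ A) := by
  have hP : A ::ₘ P.erase A = P := Multiset.cons_erase hA
  have hsum2 : A.val + ((P.erase A).map Finset.val).sum = m := by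
    rw [← hsum, ← hP]; simp
  constructor
  · rintro ⟨s, hs, hx, hy⟩
    have hsP : s ∈ P := Multiset.mem_of_mem_erase hs
    have key : ∀ w : V, w ∈ s → w ∉ A := by
      intro w hws hwA
      have h1 : (1:ℕ) ≤ Multiset.count w A.val := by
        exact (Multiset.one_le_count_iff_mem).2 hwA
      have hle : s.val ≤ ((P.erase A).map Finset.val).sum :=
        Multiset.le_sum_of_mem (Multiset.mem_map_of_mem _ hs)
      have h2 : (1:ℕ) ≤ Multiset.count w ((P.erase A).map Finset.val).sum := by
        refine le_trans ?_ (Multiset.le_iff_count.1 hle w)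
        exact (Multiset.one_le_count_iff_mem).2 hws
      have : (2:ℕ) ≤ Multiset.count w m := by rw [← hsum2, Multiset.count_add]; omega
      have := count_le_one_of_nodup hm w
      omega
    exact ⟨⟨s, hsP, hx, hy⟩, key x hx, key y hy⟩
  · rintro ⟨⟨s, hs, hx, hy⟩, hxA, _⟩
    have hne : s ≠ A := fun h => hxA (h ▸ hx)
    exact ⟨s, (Multiset.mem_erase_of_ne hne).2 hs, hx, hy⟩

lemma ext_core : ∀ (m : Multiset V) (P Q : Multiset (Finset V)), m.Nodup →
    (P.map Finset.val).sum = m → (Q.map Finset.val).sum = m →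
    Multiset.card P = Multiset.card Q →
    (∀ x y, relP P x y ↔ relP Q x y) → P = Q := by
  intro m
  induction m using Multiset.strongInductionOn with
  | _ m ih =>
    intro P Q hm hP hQ hcard hrel
    by_cases hm0 : m = 0
    · subst hm0
      have hPe : ∀ s ∈ P, s = ∅ := by
        intro s hs
        have : s.val = 0 := Multiset.sum_eq_zero_iff.1 hP s.val (Multiset.mem_map_of_mem _ hs)
        exact Finset.val_eq_zero.1 this
      have hQe : ∀ s ∈ Q, s = ∅ := by
        intro s hs
        have : s.val = 0 := Multiset.sum_eq_zero_iff.1 hQ s.val (Multiset.mem_map_of_mem _ hs)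
        exact Finset.val_eq_zero.1 this
      rw [Multiset.eq_replicate_card.2 hPe, Multiset.eq_replicate_card.2 hQe, hcard]
    · obtain ⟨x, hx⟩ := Multiset.exists_mem_of_ne_zero hm0
      obtain ⟨A, hA, hxA⟩ : ∃ A ∈ P, x ∈ A := by
        rw [← hP] at hx
        obtain ⟨sv, hsv, hx⟩ := mem_msum.1 hx
        obtain ⟨s, hs, rfl⟩ := Multiset.mem_map.1 hsv
        exact ⟨s, hs, hx⟩
      obtain ⟨B, hB, hxB⟩ : ∃ B ∈ Q, x ∈ B := by
        rw [← hQ] at hx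
        obtain ⟨sv, hsv, hx⟩ := mem_msum.1 hx
        obtain ⟨s, hs, rfl⟩ := Multiset.mem_map.1 hsv
        exact ⟨s, hs, hx⟩
      have hAB : A = B := by
        ext y
        constructor
        · intro hy
          obtain ⟨t, ht, hxt, hyt⟩ := (hrel x y).1 ⟨A, hA, hxA, hy⟩
          rwa [part_unique hm hQ ht hB hxt hxB] at hyt
        · intro hy
          obtain ⟨t, ht, hxt, hyt⟩ := (hrel x y).2 ⟨B, hB, hxB, hy⟩
          rwa [part_unique hm hP ht hA hxt hxA] at hyt
      subst hAB
      have hPc : A ::ₘ P.erase A = P := Multiset.cons_erase hA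
      have hQc : A ::ₘ Q.erase A = Q := Multiset.cons_erase hB
      set m' := ((P.erase A).map Finset.val).sum with hm'def
      have hsum2 : A.val + m' = m := by rw [← hP, ← hPc]; simp; exact hm'def
      have hsum2Q : A.val + ((Q.erase A).map Finset.val).sum = m := by
        rw [← hQ, ← hQc]; simp
      have hQ' : ((Q.erase A).map Finset.val).sum = m' := by
        have := hsum2Q.trans hsum2.symm
        exact (add_left_cancel this)
      have hle' : m' ≤ m := hsum2 ▸ le_add_self
      have hlt : m' < m := by
        refine lt_of_le_of_ne hle' ?_
        intro h
        rw [h] at hsum2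
        have hA0 : A = ∅ := by
          have := congrArg Multiset.card hsum2
          simpa using this
        rw [hA0] at hxA
        simp at hxA
      have hnd : m'.Nodup := Multiset.nodup_of_le hle' hm
      have hc : Multiset.card (P.erase A) = Multiset.card (Q.erase A) := by
        rw [Multiset.card_erase_of_mem hA, Multiset.card_erase_of_mem hB, hcard]
      have hrel' : ∀ x y, relP (P.erase A) x y ↔ relP (Q.erase A) x y := by
        intro a b
        rw [relP_erase hm hP hA, relP_erase hm hQ hB, hrel a b]
      have := ih m' hlt (P.erase A) (Q.erase A) hnd rfl hQ' hc hrel'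
      rw [← hPc, ← hQc, this]

lemma part_mem_of_char {P : Multiset (Finset V)} {m : Multiset V} (hm : m.Nodup)
    (hsum : (P.map Finset.val).sum = m) {x : V} (hx : x ∈ m) {A : Finset V}
    (hch : ∀ y, relP P x y ↔ y ∈ A) : A ∈ P := by
  rw [← hsum] at hx
  obtain ⟨sv, hsv, hx'⟩ := mem_msum.1 hx
  obtain ⟨s, hs, rfl⟩ := Multiset.mem_map.1 hsv
  have : s = A := by
    ext y
    rw [← hch y]
    constructor
    · intro hy; exact ⟨s, hs, hx', hy⟩
    · rintro ⟨t, ht, hxt, hyt⟩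
      rwa [part_unique hm hsum ht hs hxt hx'] at hyt
  rwa [this] at hs

lemma sum_map_erase {M : Multiset (Finset V)} {v : V}
    (h : Multiset.count v ((M.map Finset.val).sum) ≤ 1) :
    ((M.map (fun s => s.erase v)).map Finset.val).sum = ((M.map Finset.val).sum).erase v := by
  induction M using Multiset.induction with
  | empty => simp
  | cons s M ih =>
    simp only [Multiset.map_cons, Multiset.sum_cons, Finset.erase_val] at *
    by_cases hv : v ∈ s.val
    · have h1 : (1:ℕ) ≤ Multiset.count v s.val := by
        exact (Multiset.one_le_count_iff_mem).2 hv
      have h0 : Multiset.count v ((M.map Finset.val).sum) = 0 := by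
        rw [Multiset.count_add] at h; omega
      have hvn : v ∉ (M.map Finset.val).sum := by
        rw [← Multiset.count_pos] at *; omega
      have : (M.map (fun s => s.erase v)) = M := by
        conv_rhs => rw [← Multiset.map_id' M]
        apply Multiset.map_congr rfl
        intro t ht
        apply Finset.erase_eq_of_notMem
        intro hvt
        exact hvn (mem_msum.2 ⟨t.val, Multiset.mem_map_of_mem _ ht, hvt⟩)
      rw [this, Multiset.erase_add_left_pos _ hv]
    · have hs : s.val.erase v = s.val := Multiset.erase_of_notMem hv
      rw [Multiset.count_add] at h
      have : Multiset.count v ((M.map Finset.val).sum) ≤ 1 := by omega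
      rw [hs, ih this, Multiset.erase_add_right_neg _ hv]

lemma relP_eraseVtx {P : Multiset (Finset V)} {v x y : V} :
    relP (eraseVtx P v) x y ↔ (x ≠ v ∧ y ≠ v ∧ relP P x y) := by
  constructor
  · rintro ⟨s, hs, hx, hy⟩
    obtain ⟨t, ht, rfl⟩ := Multiset.mem_map.1 hs
    exact ⟨(Finset.mem_erase.1 hx).1, (Finset.mem_erase.1 hy).1,
      t, ht, (Finset.mem_erase.1 hx).2, (Finset.mem_erase.1 hy).2⟩
  · rintro ⟨hx, hy, s, hs, hxs, hys⟩
    exact ⟨s.erase v, Multiset.mem_map_of_mem _ hs,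
      Finset.mem_erase.2 ⟨hx, hxs⟩, Finset.mem_erase.2 ⟨hy, hys⟩⟩

def agOff (v : V) (P Q : Multiset (Finset V)) : Prop :=
  ∀ x y, x ≠ v → y ≠ v → (relP P x y ↔ relP Q x y)

lemma univ_nodup : ((Finset.univ : Finset V)).val.Nodup := Finset.univ.nodup

lemma erase_eq_iff {G : SimpleGraph V} {k : ℕ} {P Q : Multiset (Finset V)}
    (hP : IsStablePartition G k P) (hQ : IsStablePartition G k Q) (v : V) :
    eraseVtx P v = eraseVtx Q v ↔ agOff v P Q := by
  constructor
  · intro h x y hx hy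
    have h1 : relP P x y ↔ relP (eraseVtx P v) x y := by
      rw [relP_eraseVtx]; tauto
    have h2 : relP Q x y ↔ relP (eraseVtx Q v) x y := by
      rw [relP_eraseVtx]; tauto
    rw [h1, h2, h]
  · intro hag
    have hcnt : ∀ (R : Multiset (Finset V)), (R.map Finset.val).sum = (Finset.univ : Finset V).val →
        Multiset.count v ((R.map Finset.val).sum) ≤ 1 := by
      intro R hR; rw [hR]; exact count_le_one_of_nodup univ_nodup v
    apply ext_core (((Finset.univ : Finset V)).val.erase v)
    · exact Multiset.Nodup.erase v univ_nodup
    · rw [eraseVtx, sum_map_erase (hcnt P hP.2.1), hP.2.1]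
    · rw [eraseVtx, sum_map_erase (hcnt Q hQ.2.1), hQ.2.1]
    · simp only [eraseVtx, Multiset.card_map, hP.1, hQ.1]
    · intro x y
      rw [relP_eraseVtx, relP_eraseVtx]
      constructor
      · rintro ⟨hx, hy, h⟩; exact ⟨hx, hy, (hag x y hx hy).1 h⟩
      · rintro ⟨hx, hy, h⟩; exact ⟨hx, hy, (hag x y hx hy).2 h⟩

lemma eq_iff {G : SimpleGraph V} {k : ℕ} {P Q : Multiset (Finset V)}
    (hP : IsStablePartition G k P) (hQ : IsStablePartition G k Q) :
    P = Q ↔ ∀ x y, relP P x y ↔ relP Q x y := by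
  constructor
  · rintro rfl x y; rfl
  · intro h
    exact ext_core (Finset.univ : Finset V).val P Q univ_nodup hP.2.1 hQ.2.1
      (hP.1.trans hQ.1.symm) h

end BellAux

namespace BellAux

variable {V : Type*} [Fintype V] [DecidableEq V] {G : SimpleGraph V} {k : ℕ}

abbrev SP (G : SimpleGraph V) (k : ℕ) := {P : Multiset (Finset V) // IsStablePartition G k P}

def rl (P : SP G k) (x y : V) : Prop := relP P.1 x y

def ag (v : V) (P Q : SP G k) : Prop := agOff v P.1 Q.1

lemma rl_refl (P : SP G k) (x : V) : rl P x x :=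
  rel_refl' P.2.2.1 (by simp)

lemma rl_symm {P : SP G k} {x y : V} (h : rl P x y) : rl P y x := relP_symm h

lemma rl_trans {P : SP G k} {x y z : V} (h1 : rl P x y) (h2 : rl P y z) : rl P x z :=
  rel_trans' univ_nodup P.2.2.1 h1 h2

lemma ag_symm {v : V} {P Q : SP G k} (h : ag v P Q) : ag v Q P :=
  fun x y hx hy => (h x y hx hy).symm

lemma ag_trans {v : V} {P Q R : SP G k} (h1 : ag v P Q) (h2 : ag v Q R) : ag v P R :=
  fun x y hx hy => (h1 x y hx hy).trans (h2 x y hx hy)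

lemma ag_refl (v : V) (P : SP G k) : ag v P P := fun _ _ _ _ => Iff.rfl

lemma eqSP {P Q : SP G k} : P = Q ↔ ∀ x y, rl P x y ↔ rl Q x y := by
  rw [Subtype.ext_iff]
  exact eq_iff P.2 Q.2

lemma agE {P Q : SP G k} {v : V} : eraseVtx P.1 v = eraseVtx Q.1 v ↔ ag v P Q :=
  erase_eq_iff P.2 Q.2 v

lemma ne_rel {P Q : SP G k} (h : P ≠ Q) : ∃ x y, ¬(rl P x y ↔ rl Q x y) := by
  by_contra hc
  push_neg at hc
  exact h (eqSP.2 hc)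

lemma ag_forces {v : V} {P Q : SP G k} (h : ag v P Q) {x y : V}
    (hne : ¬(rl P x y ↔ rl Q x y)) : x = v ∨ y = v := by
  by_contra hc
  push_neg at hc
  exact hne (h x y hc.1 hc.2)

/-- `x` is outside the triple `{t₁,t₂,t₃}`. -/
def offT (t₁ t₂ t₃ x : V) : Prop := x ≠ t₁ ∧ x ≠ t₂ ∧ x ≠ t₃

lemma iff_swap {X Y : SP G k} {a b : V} (h : rl X a b ↔ rl Y a b) :
    rl X b a ↔ rl Y b a :=
  ⟨fun hh => rl_symm (h.1 (rl_symm hh)), fun hh => rl_symm (h.2 (rl_symm hh))⟩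

lemma ag_of_out {X Y : SP G k} {p q r : V}
    (hout : ∀ x y, (offT p q r x ∨ offT p q r y) → (rl X x y ↔ rl Y x y))
    (hpq : rl X p q ↔ rl Y p q) : ag r X Y := by
  intro x y hx hy
  by_cases hx1 : x = p
  · by_cases hy1 : y = p
    · subst hx1; subst hy1; exact iff_of_true (rl_refl _ _) (rl_refl _ _)
    · by_cases hy2 : y = q
      · subst hx1; subst hy2; exact hpq
      · exact hout x y (Or.inr ⟨hy1, hy2, hy⟩)
  · by_cases hx2 : x = q
    · by_cases hy1 : y = p
      · subst hx2; subst hy1; exact iff_swap hpq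
      · by_cases hy2 : y = q
        · subst hx2; subst hy2; exact iff_of_true (rl_refl _ _) (rl_refl _ _)
        · exact hout x y (Or.inr ⟨hy1, hy2, hy⟩)
    · exact hout x y (Or.inl ⟨hx1, hx2, hx⟩)

lemma realizer_eq {X Y : SP G k} {p q r u : V} (hpq : p ≠ q)
    (h1 : ¬(rl X p r ↔ rl Y p r)) (h2 : ¬(rl X q r ↔ rl Y q r)) (hu : ag u X Y) : u = r := by
  rcases ag_forces hu h1 with h | h
  · rcases ag_forces hu h2 with h' | h'
    · exact absurd (h.trans h'.symm) hpq
    · exact h'.symm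
  · exact h.symm

/-- Full structure of a cyclic T-triangle at the level of relations. -/
structure CyclicStruct (P₁ P₂ P₃ : SP G k) (t₁ t₂ t₃ : V) : Prop where
  ne12 : t₁ ≠ t₂
  ne13 : t₁ ≠ t₃
  ne23 : t₂ ≠ t₃
  ag3 : ag t₃ P₁ P₂
  ag1 : ag t₁ P₂ P₃
  ag2 : ag t₂ P₃ P₁
  out : ∀ x y, (offT t₁ t₂ t₃ x ∨ offT t₁ t₂ t₃ y) →
    ((rl P₁ x y ↔ rl P₂ x y) ∧ (rl P₂ x y ↔ rl P₃ x y))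
  n112 : ¬ rl P₁ t₁ t₂
  n113 : ¬ rl P₁ t₁ t₃
  p123 : rl P₁ t₂ t₃
  n212 : ¬ rl P₂ t₁ t₂
  p213 : rl P₂ t₁ t₃
  n223 : ¬ rl P₂ t₂ t₃
  p312 : rl P₃ t₁ t₂
  n313 : ¬ rl P₃ t₁ t₃
  n323 : ¬ rl P₃ t₂ t₃
  iso : ∀ z, offT t₁ t₂ t₃ z →
    (¬ rl P₁ t₁ z ∧ ¬ rl P₁ t₂ z ∧ ¬ rl P₁ t₃ z) ∧
    (¬ rl P₂ t₁ z ∧ ¬ rl P₂ t₂ z ∧ ¬ rl P₂ t₃ z) ∧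
    (¬ rl P₃ t₁ z ∧ ¬ rl P₃ t₂ z ∧ ¬ rl P₃ t₃ z)

/-- Full structure of a radial T-triangle (with `P₁` the centre). -/
structure RadialStruct (P₁ P₂ P₃ : SP G k) (t₁ t₂ t₃ : V) : Prop where
  ne12 : t₁ ≠ t₂
  ne13 : t₁ ≠ t₃
  ne23 : t₂ ≠ t₃
  ag3 : ag t₃ P₁ P₂
  ag1 : ag t₁ P₂ P₃
  ag2 : ag t₂ P₃ P₁
  out : ∀ x y, (offT t₁ t₂ t₃ x ∨ offT t₁ t₂ t₃ y) →
    ((rl P₁ x y ↔ rl P₂ x y) ∧ (rl P₂ x y ↔ rl P₃ x y))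
  p112 : rl P₁ t₁ t₂
  p113 : rl P₁ t₁ t₃
  p123 : rl P₁ t₂ t₃
  p212 : rl P₂ t₁ t₂
  n213 : ¬ rl P₂ t₁ t₃
  n223 : ¬ rl P₂ t₂ t₃
  n312 : ¬ rl P₃ t₁ t₂
  p313 : rl P₃ t₁ t₃
  n323 : ¬ rl P₃ t₂ t₃
  iso : ∀ z, offT t₁ t₂ t₃ z →
    (¬ rl P₁ t₁ z ∧ ¬ rl P₁ t₂ z ∧ ¬ rl P₁ t₃ z) ∧
    (¬ rl P₂ t₁ z ∧ ¬ rl P₂ t₂ z ∧ ¬ rl P₂ t₃ z) ∧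
    (¬ rl P₃ t₁ z ∧ ¬ rl P₃ t₂ z ∧ ¬ rl P₃ t₃ z)

end BellAux

namespace BellAux

variable {V : Type*} [Fintype V] [DecidableEq V] {G : SimpleGraph V} {k : ℕ}

lemma offT_rot {a b c x : V} (h : offT a b c x) : offT b c a x := ⟨h.2.1, h.2.2, h.1⟩

lemma iso_one {P₁ P₂ P₃ : SP G k} {t₁ t₂ t₃ : V}
    (hout : ∀ x y, (offT t₁ t₂ t₃ x ∨ offT t₁ t₂ t₃ y) →
      ((rl P₁ x y ↔ rl P₂ x y) ∧ (rl P₂ x y ↔ rl P₃ x y)))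
    {X Y : SP G k} (hX : X = P₁ ∨ X = P₂ ∨ X = P₃) (hY : Y = P₁ ∨ Y = P₂ ∨ Y = P₃)
    {v w : V} (hrel : rl X v w) (hnrel : ¬ rl Y v w) :
    ∀ z, offT t₁ t₂ t₃ z → ¬ rl P₁ v z ∧ ¬ rl P₂ v z ∧ ¬ rl P₃ v z := by
  intro z hz
  have toP1 : ∀ (W : SP G k), (W = P₁ ∨ W = P₂ ∨ W = P₃) → ∀ a, (rl W a z ↔ rl P₁ a z) := by
    intro W hW a
    have h := hout a z (Or.inr hz)
    rcases hW with rfl | rfl | rfl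
    · exact Iff.rfl
    · exact h.1.symm
    · exact (h.1.trans h.2).symm
  have base : ¬ rl P₁ v z := by
    intro hvz
    have hXv : rl X v z := (toP1 X hX v).2 hvz
    have hXw : rl X w z := rl_trans (rl_symm hrel) hXv
    have hYw : rl Y w z := (toP1 Y hY w).2 ((toP1 X hX w).1 hXw)
    have hYv : rl Y v z := (toP1 Y hY v).2 hvz
    exact hnrel (rl_trans hYv (rl_symm hYw))
  have h := hout v z (Or.inr hz)
  exact ⟨base, fun hh => base (h.1.2 hh), fun hh => base ((h.1.trans h.2).2 hh)⟩

lemma tri_classify (P₁ P₂ P₃ : SP G k) (h12 : P₁ ≠ P₂) (h13 : P₁ ≠ P₃) (h23 : P₂ ≠ P₃)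
    (v₁ v₂ v₃ : V) (a3 : ag v₃ P₁ P₂) (a1 : ag v₁ P₂ P₃) (a2 : ag v₂ P₃ P₁)
    (hT : ¬ ∃ u, ag u P₁ P₂ ∧ ag u P₂ P₃ ∧ ag u P₃ P₁) :
    CyclicStruct P₁ P₂ P₃ v₁ v₂ v₃ ∨ RadialStruct P₁ P₂ P₃ v₁ v₂ v₃ ∨
      RadialStruct P₂ P₃ P₁ v₂ v₃ v₁ ∨ RadialStruct P₃ P₁ P₂ v₃ v₁ v₂ := by
  have opp : ∀ {A B : Prop}, ¬(A ↔ B) → A → ¬B := fun h ha hb => h (iff_of_true ha hb)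
  have opp' : ∀ {A B : Prop}, ¬(A ↔ B) → ¬A → B := by
    intro A B h ha; by_contra hb; exact h (iff_of_false ha hb)
  -- distinctness of the realizers
  have hv12 : v₁ ≠ v₂ := by
    rintro rfl
    exact hT ⟨v₁, ag_trans (ag_symm a2) (ag_symm a1), a1, a2⟩
  have hv13 : v₁ ≠ v₃ := by
    rintro rfl
    exact hT ⟨v₁, a3, a1, ag_trans (ag_symm a1) (ag_symm a3)⟩
  have hv23 : v₂ ≠ v₃ := by
    rintro rfl
    exact hT ⟨v₂, a3, ag_trans (ag_symm a3) (ag_symm a2), a2⟩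
  -- agreement outside the triple
  have main : ∀ x y, offT v₁ v₂ v₃ y →
      ((rl P₁ x y ↔ rl P₂ x y) ∧ (rl P₂ x y ↔ rl P₃ x y)) := by
    intro x y hy
    by_cases hx1 : x = v₁
    · subst hx1
      have i12 := a3 x y hv13 hy.2.2
      have i31 := a2 x y hv12 hy.2.1
      exact ⟨i12, i12.symm.trans i31.symm⟩
    · by_cases hx2 : x = v₂
      · subst hx2
        have i12 := a3 x y hv23 hy.2.2
        have i23 := a1 x y (Ne.symm hv12) hy.1
        exact ⟨i12, i23⟩
      · by_cases hx3 : x = v₃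
        · subst hx3
          have i23 := a1 x y (Ne.symm hv13) hy.1
          have i31 := a2 x y (Ne.symm hv23) hy.2.1
          exact ⟨(i23.trans i31).symm, i23⟩
        · exact ⟨a3 x y hx3 hy.2.2, a1 x y hx1 hy.1⟩
  have hout : ∀ x y, (offT v₁ v₂ v₃ x ∨ offT v₁ v₂ v₃ y) →
      ((rl P₁ x y ↔ rl P₂ x y) ∧ (rl P₂ x y ↔ rl P₃ x y)) := by
    intro x y h
    rcases h with hx | hy
    · have := main y x hx
      exact ⟨iff_swap this.1, iff_swap this.2⟩
    · exact main x y hy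
  have hout12 : ∀ x y, (offT v₁ v₂ v₃ x ∨ offT v₁ v₂ v₃ y) → (rl P₁ x y ↔ rl P₂ x y) :=
    fun x y h => (hout x y h).1
  have hout23 : ∀ x y, (offT v₁ v₂ v₃ x ∨ offT v₁ v₂ v₃ y) → (rl P₂ x y ↔ rl P₃ x y) :=
    fun x y h => (hout x y h).2
  have hout31 : ∀ x y, (offT v₁ v₂ v₃ x ∨ offT v₁ v₂ v₃ y) → (rl P₃ x y ↔ rl P₁ x y) :=
    fun x y h => ((hout x y h).1.trans (hout x y h).2).symm
  -- transfers on the three special pairs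
  have t_a : rl P₁ v₁ v₂ ↔ rl P₂ v₁ v₂ := a3 v₁ v₂ hv13 hv23
  have t_b : rl P₂ v₂ v₃ ↔ rl P₃ v₂ v₃ := a1 v₂ v₃ (Ne.symm hv12) (Ne.symm hv13)
  have t_c : rl P₃ v₁ v₃ ↔ rl P₁ v₁ v₃ := a2 v₁ v₃ hv12 (Ne.symm hv23)
  -- rotation converters
  have conv2 : ∀ {x : V}, offT v₂ v₃ v₁ x → offT v₁ v₂ v₃ x :=
    fun h => offT_rot (offT_rot h)
  have conv3 : ∀ {x : V}, offT v₃ v₁ v₂ x → offT v₁ v₂ v₃ x := fun h => offT_rot h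
  -- the three xor facts
  have na : ¬ (rl P₁ v₁ v₂ ↔ rl P₃ v₁ v₂) := by
    intro hiff
    refine hT ⟨v₃, a3, ?_, ?_⟩
    · exact ag_of_out (p := v₁) (q := v₂) hout23 (t_a.symm.trans hiff)
    · exact ag_of_out (p := v₁) (q := v₂) hout31 hiff.symm
  have nb : ¬ (rl P₂ v₂ v₃ ↔ rl P₁ v₂ v₃) := by
    intro hiff
    have g12 : ag v₁ P₁ P₂ := by
      refine ag_of_out (p := v₂) (q := v₃) ?_ hiff.symm
      intro x y h
      exact hout12 x y (h.imp conv2 conv2)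
    have g31 : ag v₁ P₃ P₁ := by
      refine ag_of_out (p := v₂) (q := v₃) ?_ (t_b.symm.trans hiff)
      intro x y h
      exact hout31 x y (h.imp conv2 conv2)
    exact hT ⟨v₁, g12, a1, g31⟩
  have nc : ¬ (rl P₃ v₁ v₃ ↔ rl P₂ v₁ v₃) := by
    intro hiff
    have g23 : ag v₂ P₂ P₃ := by
      refine ag_of_out (p := v₃) (q := v₁) ?_ ?_
      · intro x y h
        exact hout23 x y (h.imp conv3 conv3)
      · exact iff_swap hiff.symm
    have g12 : ag v₂ P₁ P₂ := by
      refine ag_of_out (p := v₃) (q := v₁) ?_ ?_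
      · intro x y h
        exact hout12 x y (h.imp conv3 conv3)
      · exact iff_swap (t_c.symm.trans hiff)
    exact hT ⟨v₂, g12, g23, a2⟩
  by_cases ha : rl P₁ v₁ v₂ <;> by_cases hb : rl P₂ v₂ v₃ <;> by_cases hc : rl P₁ v₁ v₃
  · -- (T,T,T) impossible
    exact absurd (rl_trans (rl_symm ha) hc) (opp nb hb)
  · -- (T,T,F) radial centred at P₂
    right; right; left
    have n3c : ¬ rl P₃ v₁ v₃ := fun h => hc (t_c.1 h)
    have p2c : rl P₂ v₁ v₃ := opp' nc n3c
    have n31a : ¬ rl P₃ v₁ v₂ := opp na ha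
    have n1b : ¬ rl P₁ v₂ v₃ := opp nb hb
    have I1 := iso_one hout (Or.inl rfl) (Or.inr (Or.inr rfl)) ha n31a
    have I2 := iso_one hout (Or.inl rfl) (Or.inr (Or.inr rfl)) (rl_symm ha)
      (fun h => n31a (rl_symm h))
    have I3 := iso_one hout (Or.inr (Or.inl rfl)) (Or.inl rfl) (rl_symm hb)
      (fun h => n1b (rl_symm h))
    refine ⟨hv23, Ne.symm hv12, Ne.symm hv13, a1, a2, a3, ?_, hb, rl_symm (t_a.1 ha),
      rl_symm p2c, t_b.1 hb, fun h => n31a (rl_symm h), fun h => n3c (rl_symm h),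
      n1b, rl_symm ha, fun h => hc (rl_symm h), ?_⟩
    · intro x y h
      have h' := hout x y (h.imp conv2 conv2)
      exact ⟨h'.2, (h'.1.trans h'.2).symm⟩
    · intro z hz
      have hz' := conv2 hz
      exact ⟨⟨(I2 z hz').2.1, (I3 z hz').2.1, (I1 z hz').2.1⟩,
        ⟨(I2 z hz').2.2, (I3 z hz').2.2, (I1 z hz').2.2⟩,
        ⟨(I2 z hz').1, (I3 z hz').1, (I1 z hz').1⟩⟩
  · -- (T,F,T) radial centred at P₁
    right; left
    have p3c : rl P₃ v₁ v₃ := t_c.2 hc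
    have n213 : ¬ rl P₂ v₁ v₃ := opp nc p3c
    have n312 : ¬ rl P₃ v₁ v₂ := opp na ha
    have I1 := iso_one hout (Or.inl rfl) (Or.inr (Or.inr rfl)) ha n312
    have I2 := iso_one hout (Or.inl rfl) (Or.inr (Or.inr rfl)) (rl_symm ha)
      (fun h => n312 (rl_symm h))
    have I3 := iso_one hout (Or.inl rfl) (Or.inr (Or.inl rfl)) (rl_symm hc)
      (fun h => n213 (rl_symm h))
    exact ⟨hv12, hv13, hv23, a3, a1, a2, hout, ha, hc, rl_trans (rl_symm ha) hc,
      t_a.1 ha, n213, hb, n312, p3c, fun h => hb (t_b.2 h),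
      fun z hz => ⟨⟨(I1 z hz).1, (I2 z hz).1, (I3 z hz).1⟩,
        ⟨(I1 z hz).2.1, (I2 z hz).2.1, (I3 z hz).2.1⟩,
        ⟨(I1 z hz).2.2, (I2 z hz).2.2, (I3 z hz).2.2⟩⟩⟩
  · -- (T,F,F) impossible
    exact (hc (rl_trans ha (opp' nb hb))).elim
  · -- (F,T,T) radial centred at P₃
    right; right; right
    have p3c : rl P₃ v₁ v₃ := t_c.2 hc
    have n2c : ¬ rl P₂ v₁ v₃ := opp nc p3c
    have p3a : rl P₃ v₁ v₂ := opp' na ha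
    have n1b : ¬ rl P₁ v₂ v₃ := opp nb hb
    have I1 := iso_one hout (Or.inl rfl) (Or.inr (Or.inl rfl)) hc n2c
    have I2 := iso_one hout (Or.inr (Or.inl rfl)) (Or.inl rfl) hb n1b
    have I3 := iso_one hout (Or.inl rfl) (Or.inr (Or.inl rfl)) (rl_symm hc)
      (fun h => n2c (rl_symm h))
    refine ⟨Ne.symm hv13, Ne.symm hv23, hv12, a2, a3, a1, ?_,
      rl_symm p3c, rl_symm (t_b.1 hb), p3a, rl_symm hc,
      fun h => n1b (rl_symm h), ha, fun h => n2c (rl_symm h), rl_symm hb,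
      fun h => ha (t_a.2 h), ?_⟩
    · intro x y h
      have h' := hout x y (h.imp conv3 conv3)
      exact ⟨(h'.1.trans h'.2).symm, h'.1⟩
    · intro z hz
      have hz' := conv3 hz
      exact ⟨⟨(I3 z hz').2.2, (I1 z hz').2.2, (I2 z hz').2.2⟩,
        ⟨(I3 z hz').1, (I1 z hz').1, (I2 z hz').1⟩,
        ⟨(I3 z hz').2.1, (I1 z hz').2.1, (I2 z hz').2.1⟩⟩
  · -- (F,T,F) impossible
    have n3c : ¬ rl P₃ v₁ v₃ := fun h => hc (t_c.1 h)
    have p2c : rl P₂ v₁ v₃ := opp' nc n3c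
    exact (ha (t_a.2 (rl_trans p2c (rl_symm hb)))).elim
  · -- (F,F,T) impossible
    have p3a : rl P₃ v₁ v₂ := opp' na ha
    have p3c : rl P₃ v₁ v₃ := t_c.2 hc
    exact (hb (t_b.2 (rl_trans (rl_symm p3a) p3c))).elim
  · -- (F,F,F) cyclic
    left
    have p123 : rl P₁ v₂ v₃ := opp' nb hb
    have n212 : ¬ rl P₂ v₁ v₂ := fun h => ha (t_a.2 h)
    have n313 : ¬ rl P₃ v₁ v₃ := fun h => hc (t_c.1 h)
    have p213 : rl P₂ v₁ v₃ := opp' nc n313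
    have p312 : rl P₃ v₁ v₂ := opp' na ha
    have n323 : ¬ rl P₃ v₂ v₃ := fun h => hb (t_b.2 h)
    have I1 := iso_one hout (Or.inr (Or.inl rfl)) (Or.inl rfl) p213 hc
    have I2 := iso_one hout (Or.inl rfl) (Or.inr (Or.inl rfl)) p123 hb
    have I3 := iso_one hout (Or.inr (Or.inl rfl)) (Or.inr (Or.inr rfl)) (rl_symm p213)
      (fun h => n313 (rl_symm h))
    exact ⟨hv12, hv13, hv23, a3, a1, a2, hout, ha, hc, p123, n212, p213, hb,
      p312, n313, n323,
      fun z hz => ⟨⟨(I1 z hz).1, (I2 z hz).1, (I3 z hz).1⟩,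
        ⟨(I1 z hz).2.1, (I2 z hz).2.1, (I3 z hz).2.1⟩,
        ⟨(I1 z hz).2.2, (I2 z hz).2.2, (I3 z hz).2.2⟩⟩⟩

end BellAux

namespace BellAux

variable {V : Type*} [Fintype V] [DecidableEq V] {G : SimpleGraph V} {k : ℕ}

lemma nswap {X Y : SP G k} {a b : V} (h : ¬(rl X a b ↔ rl Y a b)) :
    ¬(rl X b a ↔ rl Y b a) := fun hiff => h (iff_swap hiff)

lemma not_offT {a b c x : V} (h : ¬ offT a b c x) : x = a ∨ x = b ∨ x = c := by
  unfold offT at h; tauto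

lemma ext_clash {P₄ A B : SP G k} {r z p q : V}
    (hA : ag r P₄ A) (hB : ag z P₄ B)
    (hp : p ≠ r) (hq : q ≠ r) (hp' : p ≠ z) (hq' : q ≠ z)
    (d : ¬(rl A p q ↔ rl B p q)) : False :=
  d ((hA p q hp hq).symm.trans (hB p q hp' hq'))

lemma ext_out {P₁ P₂ P₃ P₄ : SP G k} {t₁ t₂ t₃ : V}
    (ne12 : t₁ ≠ t₂) (ne13 : t₁ ≠ t₃) (ne23 : t₂ ≠ t₃)
    (hout : ∀ x y, (offT t₁ t₂ t₃ x ∨ offT t₁ t₂ t₃ y) →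
      ((rl P₁ x y ↔ rl P₂ x y) ∧ (rl P₂ x y ↔ rl P₃ x y)))
    (d12a : ¬(rl P₁ t₁ t₃ ↔ rl P₂ t₁ t₃)) (d12b : ¬(rl P₁ t₂ t₃ ↔ rl P₂ t₂ t₃))
    (d23a : ¬(rl P₂ t₁ t₂ ↔ rl P₃ t₁ t₂)) (d23b : ¬(rl P₂ t₁ t₃ ↔ rl P₃ t₁ t₃))
    (d13a : ¬(rl P₁ t₁ t₂ ↔ rl P₃ t₁ t₂)) (d13b : ¬(rl P₁ t₂ t₃ ↔ rl P₃ t₂ t₃))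
    {w₁ w₂ w₃ : V} (hw₁ : ag w₁ P₄ P₁) (hw₂ : ag w₂ P₄ P₂) (hw₃ : ag w₃ P₄ P₃) :
    ∀ x y, (offT t₁ t₂ t₃ x ∨ offT t₁ t₂ t₃ y) → (rl P₄ x y ↔ rl P₁ x y) := by
  -- realizer identifications for the base edges
  have r12 : ∀ {u : V}, ag u P₁ P₂ → u = t₃ := fun hu => realizer_eq ne12 d12a d12b hu
  have r23 : ∀ {u : V}, ag u P₂ P₃ → u = t₁ :=
    fun hu => realizer_eq ne23 (nswap d23a) (nswap d23b) hu
  have r13 : ∀ {u : V}, ag u P₁ P₃ → u = t₂ :=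
    fun hu => realizer_eq ne13 d13a (nswap d13b) hu
  intro x y hxy
  by_cases e1 : x = w₁ ∨ y = w₁
  · by_cases e2 : x = w₂ ∨ y = w₂
    · by_cases e3 : x = w₃ ∨ y = w₃
      · exfalso
        rcases e1 with h1 | h1 <;> rcases e2 with h2 | h2 <;> rcases e3 with h3 | h3
        · -- x=w₁, x=w₂, x=w₃
          have A1 : ag x P₄ P₁ := by rw [h1]; exact hw₁
          have A2 : ag x P₄ P₂ := by rw [h2]; exact hw₂
          have A3 : ag x P₄ P₃ := by rw [h3]; exact hw₃
          have hx3 : x = t₃ := r12 (ag_trans (ag_symm A1) A2)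
          have hx1 : x = t₁ := r23 (ag_trans (ag_symm A2) A3)
          exact ne13 (hx1.symm.trans hx3)
        · -- x=w₁, x=w₂, y=w₃
          have A1 : ag x P₄ P₁ := by rw [h1]; exact hw₁
          have A2 : ag x P₄ P₂ := by rw [h2]; exact hw₂
          have A3 : ag y P₄ P₃ := by rw [h3]; exact hw₃
          have hx3 : x = t₃ := r12 (ag_trans (ag_symm A1) A2)
          have hy : offT t₁ t₂ t₃ y := by
            rcases hxy with h | h
            · exact absurd hx3 h.2.2
            · exact h
          exact ext_clash A1 A3 (fun hh => ne13 (hh.trans hx3)) (fun hh => ne23 (hh.trans hx3))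
            (Ne.symm hy.1) (Ne.symm hy.2.1) d13a
        · -- x=w₁, y=w₂, x=w₃
          have A1 : ag x P₄ P₁ := by rw [h1]; exact hw₁
          have A2 : ag y P₄ P₂ := by rw [h2]; exact hw₂
          have A3 : ag x P₄ P₃ := by rw [h3]; exact hw₃
          have hx2 : x = t₂ := r13 (ag_trans (ag_symm A1) A3)
          have hy : offT t₁ t₂ t₃ y := by
            rcases hxy with h | h
            · exact absurd hx2 h.2.1
            · exact h
          exact ext_clash A1 A2 (fun hh => ne12 (hh.trans hx2))
            (fun hh => ne23 ((hh.trans hx2).symm))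
            (Ne.symm hy.1) (Ne.symm hy.2.2) d12a
        · -- x=w₁, y=w₂, y=w₃
          have A1 : ag x P₄ P₁ := by rw [h1]; exact hw₁
          have A2 : ag y P₄ P₂ := by rw [h2]; exact hw₂
          have A3 : ag y P₄ P₃ := by rw [h3]; exact hw₃
          have hy1 : y = t₁ := r23 (ag_trans (ag_symm A2) A3)
          have hx : offT t₁ t₂ t₃ x := by
            rcases hxy with h | h
            · exact h
            · exact absurd hy1 h.1
          exact ext_clash A1 A2 (Ne.symm hx.2.1) (Ne.symm hx.2.2)
            (fun hh => ne12 ((hh.trans hy1).symm)) (fun hh => ne13 ((hh.trans hy1).symm)) d12b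
        · -- y=w₁, x=w₂, x=w₃
          have A1 : ag y P₄ P₁ := by rw [h1]; exact hw₁
          have A2 : ag x P₄ P₂ := by rw [h2]; exact hw₂
          have A3 : ag x P₄ P₃ := by rw [h3]; exact hw₃
          have hx1 : x = t₁ := r23 (ag_trans (ag_symm A2) A3)
          have hy : offT t₁ t₂ t₃ y := by
            rcases hxy with h | h
            · exact absurd hx1 h.1
            · exact h
          exact ext_clash A2 A1 (fun hh => ne12 ((hh.trans hx1).symm))
            (fun hh => ne13 ((hh.trans hx1).symm))
            (Ne.symm hy.2.1) (Ne.symm hy.2.2) (fun hh => d12b hh.symm)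
        · -- y=w₁, x=w₂, y=w₃
          have A1 : ag y P₄ P₁ := by rw [h1]; exact hw₁
          have A2 : ag x P₄ P₂ := by rw [h2]; exact hw₂
          have A3 : ag y P₄ P₃ := by rw [h3]; exact hw₃
          have hy2 : y = t₂ := r13 (ag_trans (ag_symm A1) A3)
          have hx : offT t₁ t₂ t₃ x := by
            rcases hxy with h | h
            · exact h
            · exact absurd hy2 h.2.1
          exact ext_clash A2 A1 (Ne.symm hx.1) (Ne.symm hx.2.2)
            (fun hh => ne12 (hh.trans hy2)) (fun hh => ne23 ((hh.trans hy2).symm))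
            (fun hh => d12a hh.symm)
        · -- y=w₁, y=w₂, x=w₃
          have A1 : ag y P₄ P₁ := by rw [h1]; exact hw₁
          have A2 : ag y P₄ P₂ := by rw [h2]; exact hw₂
          have A3 : ag x P₄ P₃ := by rw [h3]; exact hw₃
          have hy3 : y = t₃ := r12 (ag_trans (ag_symm A1) A2)
          have hx : offT t₁ t₂ t₃ x := by
            rcases hxy with h | h
            · exact h
            · exact absurd hy3 h.2.2
          exact ext_clash A1 A3 (fun hh => ne13 (hh.trans hy3)) (fun hh => ne23 (hh.trans hy3))
            (Ne.symm hx.1) (Ne.symm hx.2.1) d13a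
        · -- y=w₁, y=w₂, y=w₃
          have A1 : ag y P₄ P₁ := by rw [h1]; exact hw₁
          have A2 : ag y P₄ P₂ := by rw [h2]; exact hw₂
          have A3 : ag y P₄ P₃ := by rw [h3]; exact hw₃
          have hy3 : y = t₃ := r12 (ag_trans (ag_symm A1) A2)
          have hy1 : y = t₁ := r23 (ag_trans (ag_symm A2) A3)
          exact ne13 (hy1.symm.trans hy3)
      · push_neg at e3
        exact (hw₃ x y e3.1 e3.2).trans (((hout x y hxy).1.trans (hout x y hxy).2).symm)
    · push_neg at e2
      exact (hw₂ x y e2.1 e2.2).trans ((hout x y hxy).1.symm)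
  · push_neg at e1
    exact hw₁ x y e1.1 e1.2

lemma diff_triple {X Y : SP G k} {t₁ t₂ t₃ : V} (h : X ≠ Y)
    (hout : ∀ x y, (offT t₁ t₂ t₃ x ∨ offT t₁ t₂ t₃ y) → (rl X x y ↔ rl Y x y)) :
    ¬(rl X t₁ t₂ ↔ rl Y t₁ t₂) ∨ ¬(rl X t₁ t₃ ↔ rl Y t₁ t₃) ∨ ¬(rl X t₂ t₃ ↔ rl Y t₂ t₃) := by
  by_contra hc
  push_neg at hc
  obtain ⟨c1, c2, c3⟩ := hc
  apply h
  rw [eqSP]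
  intro x y
  by_cases hx : offT t₁ t₂ t₃ x
  · exact hout x y (Or.inl hx)
  · by_cases hy : offT t₁ t₂ t₃ y
    · exact hout x y (Or.inr hy)
    · rcases not_offT hx with rfl | rfl | rfl <;> rcases not_offT hy with rfl | rfl | rfl
      · exact iff_of_true (rl_refl _ _) (rl_refl _ _)
      · exact c1
      · exact c2
      · exact iff_swap c1
      · exact iff_of_true (rl_refl _ _) (rl_refl _ _)
      · exact c3
      · exact iff_swap c2
      · exact iff_swap c3
      · exact iff_of_true (rl_refl _ _) (rl_refl _ _)

lemma cyclic_ext {P₁ P₂ P₃ P₄ : SP G k} {t₁ t₂ t₃ : V}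
    (hC : CyclicStruct P₁ P₂ P₃ t₁ t₂ t₃)
    (hne1 : P₄ ≠ P₁) (hne2 : P₄ ≠ P₂) (hne3 : P₄ ≠ P₃)
    {w₁ w₂ w₃ : V} (hw₁ : ag w₁ P₄ P₁) (hw₂ : ag w₂ P₄ P₂) (hw₃ : ag w₃ P₄ P₃) :
    (∀ x y, (offT t₁ t₂ t₃ x ∨ offT t₁ t₂ t₃ y) → (rl P₄ x y ↔ rl P₁ x y)) ∧
    ((¬ rl P₄ t₁ t₂ ∧ ¬ rl P₄ t₁ t₃ ∧ ¬ rl P₄ t₂ t₃) ∨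
     (rl P₄ t₁ t₂ ∧ rl P₄ t₁ t₃ ∧ rl P₄ t₂ t₃)) := by
  have d12a : ¬(rl P₁ t₁ t₃ ↔ rl P₂ t₁ t₃) := fun h => hC.n113 (h.2 hC.p213)
  have d12b : ¬(rl P₁ t₂ t₃ ↔ rl P₂ t₂ t₃) := fun h => hC.n223 (h.1 hC.p123)
  have d23a : ¬(rl P₂ t₁ t₂ ↔ rl P₃ t₁ t₂) := fun h => hC.n212 (h.2 hC.p312)
  have d23b : ¬(rl P₂ t₁ t₃ ↔ rl P₃ t₁ t₃) := fun h => hC.n313 (h.1 hC.p213)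
  have d13a : ¬(rl P₁ t₁ t₂ ↔ rl P₃ t₁ t₂) := fun h => hC.n112 (h.2 hC.p312)
  have d13b : ¬(rl P₁ t₂ t₃ ↔ rl P₃ t₂ t₃) := fun h => hC.n323 (h.1 hC.p123)
  have out4 := ext_out hC.ne12 hC.ne13 hC.ne23 hC.out d12a d12b d23a d23b d13a d13b hw₁ hw₂ hw₃
  refine ⟨out4, ?_⟩
  have out42 : ∀ x y, (offT t₁ t₂ t₃ x ∨ offT t₁ t₂ t₃ y) → (rl P₄ x y ↔ rl P₂ x y) :=
    fun x y h => (out4 x y h).trans (hC.out x y h).1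
  have out43 : ∀ x y, (offT t₁ t₂ t₃ x ∨ offT t₁ t₂ t₃ y) → (rl P₄ x y ↔ rl P₃ x y) :=
    fun x y h => (out42 x y h).trans (hC.out x y h).2
  have gd1 := diff_triple hne1 out4
  have gd2 := diff_triple hne2 out42
  have gd3 := diff_triple hne3 out43
  by_cases hα : rl P₄ t₁ t₂ <;> by_cases hβ : rl P₄ t₁ t₃ <;> by_cases hγ : rl P₄ t₂ t₃
  · exact Or.inr ⟨hα, hβ, hγ⟩
  · exact absurd (rl_trans (rl_symm hα) hβ) hγ
  · exact absurd (rl_trans hα hγ) hβ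
  · -- (T,F,F) = f₃ pattern
    exfalso
    rcases gd3 with d | d | d
    · exact d (iff_of_true hα hC.p312)
    · exact d (iff_of_false hβ hC.n313)
    · exact d (iff_of_false hγ hC.n323)
  · exact absurd (rl_trans hβ (rl_symm hγ)) hα
  · -- (F,T,F) = f₂ pattern
    exfalso
    rcases gd2 with d | d | d
    · exact d (iff_of_false hα hC.n212)
    · exact d (iff_of_true hβ hC.p213)
    · exact d (iff_of_false hγ hC.n223)
  · -- (F,F,T) = f₁ pattern
    exfalso
    rcases gd1 with d | d | d
    · exact d (iff_of_false hα hC.n112)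
    · exact d (iff_of_false hβ hC.n113)
    · exact d (iff_of_true hγ hC.p123)
  · exact Or.inl ⟨hα, hβ, hγ⟩

lemma radial_ext {P₁ P₂ P₃ P₄ : SP G k} {t₁ t₂ t₃ : V}
    (hC : RadialStruct P₁ P₂ P₃ t₁ t₂ t₃)
    (hne1 : P₄ ≠ P₁) (hne2 : P₄ ≠ P₂) (hne3 : P₄ ≠ P₃)
    {w₁ w₂ w₃ : V} (hw₁ : ag w₁ P₄ P₁) (hw₂ : ag w₂ P₄ P₂) (hw₃ : ag w₃ P₄ P₃) :
    (∀ x y, (offT t₁ t₂ t₃ x ∨ offT t₁ t₂ t₃ y) → (rl P₄ x y ↔ rl P₁ x y)) ∧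
    (¬ rl P₄ t₁ t₂ ∧ ¬ rl P₄ t₁ t₃ ∧ rl P₄ t₂ t₃) := by
  have d12a : ¬(rl P₁ t₁ t₃ ↔ rl P₂ t₁ t₃) := fun h => hC.n213 (h.1 hC.p113)
  have d12b : ¬(rl P₁ t₂ t₃ ↔ rl P₂ t₂ t₃) := fun h => hC.n223 (h.1 hC.p123)
  have d23a : ¬(rl P₂ t₁ t₂ ↔ rl P₃ t₁ t₂) := fun h => hC.n312 (h.1 hC.p212)
  have d23b : ¬(rl P₂ t₁ t₃ ↔ rl P₃ t₁ t₃) := fun h => hC.n213 (h.2 hC.p313)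
  have d13a : ¬(rl P₁ t₁ t₂ ↔ rl P₃ t₁ t₂) := fun h => hC.n312 (h.1 hC.p112)
  have d13b : ¬(rl P₁ t₂ t₃ ↔ rl P₃ t₂ t₃) := fun h => hC.n323 (h.1 hC.p123)
  have out4 := ext_out hC.ne12 hC.ne13 hC.ne23 hC.out d12a d12b d23a d23b d13a d13b hw₁ hw₂ hw₃
  refine ⟨out4, ?_⟩
  have out42 : ∀ x y, (offT t₁ t₂ t₃ x ∨ offT t₁ t₂ t₃ y) → (rl P₄ x y ↔ rl P₂ x y) :=
    fun x y h => (out4 x y h).trans (hC.out x y h).1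
  have out43 : ∀ x y, (offT t₁ t₂ t₃ x ∨ offT t₁ t₂ t₃ y) → (rl P₄ x y ↔ rl P₃ x y) :=
    fun x y h => (out42 x y h).trans (hC.out x y h).2
  have gd1 := diff_triple hne1 out4
  have gd2 := diff_triple hne2 out42
  have gd3 := diff_triple hne3 out43
  by_cases hα : rl P₄ t₁ t₂ <;> by_cases hβ : rl P₄ t₁ t₃ <;> by_cases hγ : rl P₄ t₂ t₃
  · -- (T,T,T) = f₁
    exfalso
    rcases gd1 with d | d | d
    · exact d (iff_of_true hα hC.p112)
    · exact d (iff_of_true hβ hC.p113)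
    · exact d (iff_of_true hγ hC.p123)
  · exact absurd (rl_trans (rl_symm hα) hβ) hγ
  · exact absurd (rl_trans hα hγ) hβ
  · -- (T,F,F) = f₂
    exfalso
    rcases gd2 with d | d | d
    · exact d (iff_of_true hα hC.p212)
    · exact d (iff_of_false hβ hC.n213)
    · exact d (iff_of_false hγ hC.n223)
  · exact absurd (rl_trans hβ (rl_symm hγ)) hα
  · -- (F,T,F) = f₃
    exfalso
    rcases gd3 with d | d | d
    · exact d (iff_of_false hα hC.n312)
    · exact d (iff_of_true hβ hC.p313)
    · exact d (iff_of_false hγ hC.n323)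
  · exact ⟨hα, hβ, hγ⟩
  · -- (F,F,F): P₄ cannot be adjacent to the centre P₁
    exfalso
    have d1 : ¬(rl P₄ t₁ t₂ ↔ rl P₁ t₁ t₂) := fun h => hα (h.2 hC.p112)
    have d2 : ¬(rl P₄ t₁ t₃ ↔ rl P₁ t₁ t₃) := fun h => hβ (h.2 hC.p113)
    have d3 : ¬(rl P₄ t₂ t₃ ↔ rl P₁ t₂ t₃) := fun h => hγ (h.2 hC.p123)
    rcases ag_forces hw₁ d1 with h | h
    · rcases ag_forces hw₁ d3 with h' | h'
      · exact hC.ne12 (h.trans h'.symm)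
      · exact hC.ne13 (h.trans h'.symm)
    · rcases ag_forces hw₁ d2 with h' | h'
      · exact hC.ne12 (h'.trans h.symm)
      · exact hC.ne23 (h.trans h'.symm)

end BellAux

namespace BellAux

variable {V : Type*} [Fintype V] [DecidableEq V] {G : SimpleGraph V} {k : ℕ}

lemma opp_opp {A B C : Prop} (h1 : ¬(A ↔ B)) (h2 : ¬(A ↔ C)) : B ↔ C := by tauto

lemma pin_pair {X Y : SP G k} (h : X ≠ Y) {a b : V} (hab : a ≠ b)
    (ha : ag a X Y) (hb : ag b X Y) : ¬(rl X a b ↔ rl Y a b) := by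
  obtain ⟨x, y, hd⟩ := ne_rel h
  rcases ag_forces ha hd with h1 | h1 <;> rcases ag_forces hb hd with h2 | h2
  · exact absurd (h1.symm.trans h2) hab
  · intro hiff; apply hd; rw [h1, h2]; exact hiff
  · intro hiff; apply hd; rw [h2, h1]; exact iff_swap hiff
  · exact absurd (h2.symm.trans h1) (Ne.symm hab)

lemma global_anchor [Nonempty V] {K : Finset (SP G k)}
    (hadj : ∀ P ∈ K, ∀ Q ∈ K, P ≠ Q → ∃ v, ag v P Q)
    (hall : ∀ P ∈ K, ∀ Q ∈ K, ∀ R ∈ K, P ≠ Q → P ≠ R → Q ≠ R →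
      ∃ u, ag u P Q ∧ ag u P R ∧ ag u Q R) :
    ∃ u, ∀ P ∈ K, ∀ Q ∈ K, ag u P Q := by
  by_cases h2 : ∃ P ∈ K, ∃ Q ∈ K, P ≠ Q
  swap
  · push_neg at h2
    obtain ⟨u⟩ := ‹Nonempty V›
    refine ⟨u, fun P hP Q hQ => ?_⟩
    rw [h2 P hP Q hQ]
    exact ag_refl u Q
  obtain ⟨P₁, hP₁, P₂, hP₂, h12⟩ := h2
  by_cases h3 : ∃ Q ∈ K, Q ≠ P₁ ∧ Q ≠ P₂
  swap
  · push_neg at h3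
    obtain ⟨v, hv⟩ := hadj P₁ hP₁ P₂ hP₂ h12
    refine ⟨v, fun P hP Q hQ => ?_⟩
    have hcases : ∀ R, R ∈ K → R = P₁ ∨ R = P₂ := by
      intro R hR
      by_cases h : R = P₁
      · exact Or.inl h
      · exact Or.inr (h3 R hR h)
    rcases hcases P hP with h | h <;> rcases hcases Q hQ with h' | h' <;> rw [h, h']
    · exact ag_refl v P₁
    · exact hv
    · exact ag_symm hv
    · exact ag_refl v P₂
  obtain ⟨Q₀, hQ₀, hQ₀1, hQ₀2⟩ := h3
  obtain ⟨u, hu12, hu1Q, hu2Q⟩ :=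
    hall P₁ hP₁ P₂ hP₂ Q₀ hQ₀ h12 (Ne.symm hQ₀1) (Ne.symm hQ₀2)
  by_cases hgood : ∀ Q ∈ K, ag u P₁ Q
  · exact ⟨u, fun P hP Q hQ => ag_trans (ag_symm (hgood P hP)) (hgood Q hQ)⟩
  push_neg at hgood
  obtain ⟨Q₁, hQ₁K, hQ₁⟩ := hgood
  have hQ₁P₁ : Q₁ ≠ P₁ := fun h => hQ₁ (by rw [h]; exact ag_refl u P₁)
  have hQ₁P₂ : Q₁ ≠ P₂ := fun h => hQ₁ (by rw [h]; exact hu12)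
  have hQ₁Q₀ : Q₁ ≠ Q₀ := fun h => hQ₁ (by rw [h]; exact hu1Q)
  obtain ⟨u₁, hu₁12, hu₁1Q, hu₁2Q⟩ :=
    hall P₁ hP₁ P₂ hP₂ Q₁ hQ₁K h12 (Ne.symm hQ₁P₁) (Ne.symm hQ₁P₂)
  have hne_u : u₁ ≠ u := by
    rintro rfl
    exact hQ₁ hu₁1Q
  have d12 : ¬(rl P₁ u u₁ ↔ rl P₂ u u₁) := pin_pair h12 (Ne.symm hne_u) hu12 hu₁12
  obtain ⟨w, hw1Q₀, hw1Q₁, hwQQ⟩ :=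
    hall P₁ hP₁ Q₀ hQ₀ Q₁ hQ₁K (Ne.symm hQ₀1) (Ne.symm hQ₁P₁) (Ne.symm hQ₁Q₀)
  by_cases hwu : w = u
  · exact absurd (by rw [← hwu]; exact hw1Q₁) hQ₁
  by_cases hwu₁ : w = u₁
  · exfalso
    have hagQ₀ : ag u₁ P₁ Q₀ := by rw [← hwu₁]; exact hw1Q₀
    have dQ0 : ¬(rl P₁ u u₁ ↔ rl Q₀ u u₁) :=
      pin_pair (Ne.symm hQ₀1) (Ne.symm hne_u) hu1Q hagQ₀
    have hEQ : P₂ = Q₀ := by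
      rw [eqSP]
      intro x y
      by_cases hx : x ≠ u ∧ y ≠ u
      · exact (hu12 x y hx.1 hx.2).symm.trans (hu1Q x y hx.1 hx.2)
      · by_cases hx1 : x ≠ u₁ ∧ y ≠ u₁
        · exact (hu₁12 x y hx1.1 hx1.2).symm.trans (hagQ₀ x y hx1.1 hx1.2)
        · have hx' : x = u ∨ y = u := by
            rcases not_and_or.1 hx with h | h
            · exact Or.inl (not_not.1 h)
            · exact Or.inr (not_not.1 h)
          have hx1' : x = u₁ ∨ y = u₁ := by
            rcases not_and_or.1 hx1 with h | h
            · exact Or.inl (not_not.1 h)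
            · exact Or.inr (not_not.1 h)
          rcases hx' with h | h <;> rcases hx1' with h' | h'
          · exact absurd (h'.symm.trans h) hne_u
          · rw [h, h']; exact opp_opp d12 dQ0
          · rw [h', h]; exact opp_opp (nswap d12) (nswap dQ0)
          · exact absurd (h'.symm.trans h) hne_u
    exact hQ₀2 hEQ.symm
  exfalso
  have dA : ¬(rl P₁ u w ↔ rl Q₀ u w) :=
    pin_pair (Ne.symm hQ₀1) (fun h => hwu h.symm) hu1Q hw1Q₀
  have dB : ¬(rl P₁ u₁ w ↔ rl Q₁ u₁ w) :=
    pin_pair (Ne.symm hQ₁P₁) (fun h => hwu₁ h.symm) hu₁1Q hw1Q₁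
  obtain ⟨w', hw'2Q₀, hw'2Q₁, hw'QQ⟩ :=
    hall P₂ hP₂ Q₀ hQ₀ Q₁ hQ₁K (Ne.symm hQ₀2) (Ne.symm hQ₁P₂) (Ne.symm hQ₁Q₀)
  have iQ₀ : rl P₁ u u₁ ↔ rl Q₀ u u₁ :=
    hw1Q₀ u u₁ (fun h => hwu h.symm) (fun h => hwu₁ h.symm)
  have d2a : ¬(rl P₂ u u₁ ↔ rl Q₀ u u₁) := fun hiff => d12 (iQ₀.trans hiff.symm)
  have i2 : rl P₁ u w ↔ rl P₂ u w :=
    hu₁12 u w (fun h => hne_u h.symm) (fun h => hwu₁ h)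
  have d2b : ¬(rl P₂ u w ↔ rl Q₀ u w) := fun hiff => dA (i2.trans hiff)
  have i3 : rl P₁ u₁ w ↔ rl P₂ u₁ w := hu12 u₁ w hne_u (fun h => hwu h)
  have d2d : ¬(rl P₂ u₁ w ↔ rl Q₁ u₁ w) := fun hiff => dB (i3.trans hiff)
  rcases ag_forces hw'2Q₀ d2a with h1 | h1
  · rcases ag_forces hw'2Q₁ d2d with h2 | h2
    · exact hne_u (h2.trans h1.symm)
    · exact hwu (h2.trans h1.symm)
  · rcases ag_forces hw'2Q₀ d2b with h2 | h2
    · exact hne_u (h1.trans h2.symm)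
    · exact hwu₁ (h2.trans h1.symm)

lemma part_rel {P : SP G k} {A : Finset V} (hA : A ∈ P.1) {x y : V}
    (hx : x ∈ A) (hy : y ∈ A) : rl P x y := ⟨A, hA, hx, hy⟩

lemma singleton_part {P : SP G k} {v : V} (h : ∀ y, rl P v y → y = v) :
    ({v} : Finset V) ∈ P.1 := by
  apply part_mem_of_char univ_nodup P.2.2.1 (by simp : v ∈ (Finset.univ : Finset V).val)
  intro y
  constructor
  · intro hy
    simp [h y hy]
  · intro hy
    rw [Finset.mem_singleton.1 hy]
    exact rl_refl P v

lemma triple_part {P : SP G k} {v₁ v₂ v₃ : V} (h12 : rl P v₁ v₂) (h13 : rl P v₁ v₃)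
    (h : ∀ y, rl P v₁ y → (y = v₁ ∨ y = v₂ ∨ y = v₃)) :
    ({v₁, v₂, v₃} : Finset V) ∈ P.1 := by
  apply part_mem_of_char univ_nodup P.2.2.1 (by simp : v₁ ∈ (Finset.univ : Finset V).val)
  intro y
  constructor
  · intro hy
    simpa using h y hy
  · intro hy
    simp only [Finset.mem_insert, Finset.mem_singleton] at hy
    rcases hy with rfl | rfl | rfl
    · exact rl_refl P y
    · exact h12
    · exact h13

lemma singleton_forces {P : SP G k} {v y : V} (hmem : ({v} : Finset V) ∈ P.1)
    (h : rl P v y) : y = v := by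
  obtain ⟨s, hs, hv, hy⟩ := h
  have heq : s = {v} := part_unique univ_nodup P.2.2.1 hs hmem hv (by simp)
  rw [heq] at hy
  simpa using hy

end BellAux

namespace BellAux

variable {V : Type*} [Fintype V] [DecidableEq V] {G : SimpleGraph V} {k : ℕ}

lemma mkd {X Y : SP G k} {a b : V} (hX : rl X a b) (hY : ¬ rl Y a b) :
    ¬(rl X a b ↔ rl Y a b) := fun h => hY (h.1 hX)

lemma mkd' {X Y : SP G k} {a b : V} (hX : ¬ rl X a b) (hY : rl Y a b) :
    ¬(rl X a b ↔ rl Y a b) := fun h => hX (h.2 hY)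

lemma offT_swap23 {a b c x : V} (h : offT a b c x) : offT a c b x := ⟨h.1, h.2.2, h.2.1⟩

lemma card3 {α : Type*} [DecidableEq α] {a b c : α} (hab : a ≠ b) (hac : a ≠ c)
    (hbc : b ≠ c) : ({a, b, c} : Finset α).card = 3 := by
  rw [Finset.card_insert_of_notMem (by simp [hab, hac]),
    Finset.card_insert_of_notMem (by simp [hbc]), Finset.card_singleton]

lemma three_distinct {α : Type*} [DecidableEq α] {a b c : α}
    (h : ({a, b, c} : Finset α).card = 3) : a ≠ b ∧ a ≠ c ∧ b ≠ c := by
  refine ⟨?_, ?_, ?_⟩ <;> rintro rfl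
  · have hsub : ({a, a, c} : Finset α) ⊆ {a, c} := by intro x hx; simpa using hx
    have h1 : ({a, c} : Finset α).card ≤ 2 := by
      have := Finset.card_insert_le a ({c} : Finset α); simpa using this
    have h2 := Finset.card_le_card hsub
    omega
  · have hsub : ({a, b, a} : Finset α) ⊆ {a, b} := by
      intro x hx; simp at hx ⊢; tauto
    have h1 : ({a, b} : Finset α).card ≤ 2 := by
      have := Finset.card_insert_le a ({b} : Finset α); simpa using this
    have h2 := Finset.card_le_card hsub
    omega
  · have hsub : ({a, b, b} : Finset α) ⊆ {a, b} := by
      intro x hx; simp at hx ⊢; tauto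
    have h1 : ({a, b} : Finset α).card ≤ 2 := by
      have := Finset.card_insert_le a ({b} : Finset α); simpa using this
    have h2 := Finset.card_le_card hsub
    omega

lemma three_sub_four {α : Type*} [DecidableEq α] {K : Finset α} (h4 : K.card = 4)
    {T : Finset α} (hT : T ⊆ K) (h3 : T.card = 3) :
    ∃ x ∈ K, x ∉ T ∧ T = K.erase x := by
  have hc : (K \ T).card = 1 := by rw [Finset.card_sdiff_of_subset hT, h4, h3]
  obtain ⟨x, hx⟩ := Finset.card_eq_one.1 hc
  have hxm : x ∈ K \ T := by rw [hx]; exact Finset.mem_singleton_self x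
  have hxK : x ∈ K := (Finset.mem_sdiff.1 hxm).1
  have hxT : x ∉ T := (Finset.mem_sdiff.1 hxm).2
  refine ⟨x, hxK, hxT, ?_⟩
  apply Finset.eq_of_subset_of_card_le
  · intro y hy
    exact Finset.mem_erase.2 ⟨fun h => hxT (h ▸ hy), hT hy⟩
  · rw [Finset.card_erase_of_mem hxK, h4, h3]

lemma clique_sub {K T : Finset (SP G k)} (hK : (bellGraph G k).IsClique (K : Set _))
    (h : T ⊆ K) : (bellGraph G k).IsClique (T : Set _) :=
  hK.subset (Finset.coe_subset.2 h)

lemma anchor3 {X Y Z : SP G k} {u : V} (hXY : ag u X Y) (hXZ : ag u X Z) :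
    ∀ P ∈ ({X, Y, Z} : Finset (SP G k)), ∀ Q ∈ ({X, Y, Z} : Finset (SP G k)),
      eraseVtx P.1 u = eraseVtx Q.1 u := by
  intro P hP Q hQ
  simp only [Finset.mem_insert, Finset.mem_singleton] at hP hQ
  have key : ∀ W, W = X ∨ W = Y ∨ W = Z → ag u X W := by
    rintro W (rfl | rfl | rfl)
    exacts [ag_refl u _, hXY, hXZ]
  exact agE.2 (ag_trans (ag_symm (key P hP)) (key Q hQ))

lemma mkS3 {X Y Z : SP G k} (hcl : (bellGraph G k).IsClique (({X, Y, Z} : Finset (SP G k)) : Set _))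
    {u : V} (hXY : ag u X Y) (hXZ : ag u X Z) : IsSCliqueF G k {X, Y, Z} :=
  ⟨hcl, u, anchor3 hXY hXZ⟩

lemma mkTT {X Y Z : SP G k}
    (hcl : (bellGraph G k).IsClique (({X, Y, Z} : Finset (SP G k)) : Set _))
    (hXY : X ≠ Y) (hXZ : X ≠ Z) (hYZ : Y ≠ Z) {r s : V} (hrs : r ≠ s)
    (hr : ∀ u, ag u X Y → u = r) (hs : ∀ u, ag u X Z → u = s) :
    IsTTriangleF G k {X, Y, Z} := by
  refine ⟨hcl, card3 hXY hXZ hYZ, ?_⟩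
  rintro ⟨u, hu⟩
  have h1 : ag u X Y := agE.1 (hu X (by simp) Y (by simp))
  have h2 : ag u X Z := agE.1 (hu X (by simp) Z (by simp))
  exact hrs ((hr u h1).symm.trans (hs u h2))

/-- Realizer identification for the edges of a cyclic structure. -/
lemma cyc_r12 {P₁ P₂ P₃ : SP G k} {t₁ t₂ t₃ : V} (hC : CyclicStruct P₁ P₂ P₃ t₁ t₂ t₃)
    {u : V} (hu : ag u P₁ P₂) : u = t₃ :=
  realizer_eq hC.ne12 (mkd' hC.n113 hC.p213) (mkd hC.p123 hC.n223) hu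

lemma cyc_r13 {P₁ P₂ P₃ : SP G k} {t₁ t₂ t₃ : V} (hC : CyclicStruct P₁ P₂ P₃ t₁ t₂ t₃)
    {u : V} (hu : ag u P₁ P₃) : u = t₂ :=
  realizer_eq hC.ne13 (mkd' hC.n112 hC.p312) (nswap (mkd hC.p123 hC.n323)) hu

lemma cyc_r23 {P₁ P₂ P₃ : SP G k} {t₁ t₂ t₃ : V} (hC : CyclicStruct P₁ P₂ P₃ t₁ t₂ t₃)
    {u : V} (hu : ag u P₂ P₃) : u = t₁ :=
  realizer_eq hC.ne23 (nswap (mkd' hC.n212 hC.p312)) (nswap (mkd hC.p213 hC.n313)) hu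

lemma rad_r12 {P₁ P₂ P₃ : SP G k} {t₁ t₂ t₃ : V} (hC : RadialStruct P₁ P₂ P₃ t₁ t₂ t₃)
    {u : V} (hu : ag u P₁ P₂) : u = t₃ :=
  realizer_eq hC.ne12 (mkd hC.p113 hC.n213) (mkd hC.p123 hC.n223) hu

lemma rad_r13 {P₁ P₂ P₃ : SP G k} {t₁ t₂ t₃ : V} (hC : RadialStruct P₁ P₂ P₃ t₁ t₂ t₃)
    {u : V} (hu : ag u P₁ P₃) : u = t₂ :=
  realizer_eq hC.ne13 (mkd hC.p112 hC.n312) (nswap (mkd hC.p123 hC.n323)) hu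

lemma rad_r23 {P₁ P₂ P₃ : SP G k} {t₁ t₂ t₃ : V} (hC : RadialStruct P₁ P₂ P₃ t₁ t₂ t₃)
    {u : V} (hu : ag u P₂ P₃) : u = t₁ :=
  realizer_eq hC.ne23 (nswap (mkd hC.p212 hC.n312)) (nswap (mkd' hC.n213 hC.p313)) hu

/-- Parts from a cyclic structure. -/
lemma cyclic_mem1 {P₁ P₂ P₃ : SP G k} {t₁ t₂ t₃ : V}
    (hC : CyclicStruct P₁ P₂ P₃ t₁ t₂ t₃) : ({t₁} : Finset V) ∈ P₁.1 := by
  apply singleton_part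
  intro y h
  by_cases hy : offT t₁ t₂ t₃ y
  · exact absurd h ((hC.iso y hy).1.1)
  · rcases not_offT hy with rfl | rfl | rfl
    · rfl
    · exact absurd h hC.n112
    · exact absurd h hC.n113

lemma cyclic_mem2 {P₁ P₂ P₃ : SP G k} {t₁ t₂ t₃ : V}
    (hC : CyclicStruct P₁ P₂ P₃ t₁ t₂ t₃) : ({t₂} : Finset V) ∈ P₂.1 := by
  apply singleton_part
  intro y h
  by_cases hy : offT t₁ t₂ t₃ y
  · exact absurd h ((hC.iso y hy).2.1.2.1)
  · rcases not_offT hy with rfl | rfl | rfl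
    · exact absurd (rl_symm h) hC.n212
    · rfl
    · exact absurd h hC.n223

lemma cyclic_mem3 {P₁ P₂ P₃ : SP G k} {t₁ t₂ t₃ : V}
    (hC : CyclicStruct P₁ P₂ P₃ t₁ t₂ t₃) : ({t₃} : Finset V) ∈ P₃.1 := by
  apply singleton_part
  intro y h
  by_cases hy : offT t₁ t₂ t₃ y
  · exact absurd h ((hC.iso y hy).2.2.2.2)
  · rcases not_offT hy with rfl | rfl | rfl
    · exact absurd (rl_symm h) hC.n313
    · exact absurd (rl_symm h) hC.n323
    · rfl

lemma radial_mem {P₁ P₂ P₃ : SP G k} {t₁ t₂ t₃ : V}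
    (hC : RadialStruct P₁ P₂ P₃ t₁ t₂ t₃) : ({t₁, t₂, t₃} : Finset V) ∈ P₁.1 := by
  apply triple_part hC.p112 hC.p113
  intro y h
  by_cases hy : offT t₁ t₂ t₃ y
  · exact absurd h ((hC.iso y hy).1.1)
  · exact not_offT hy

end BellAux

namespace BellAux

variable {V : Type*} [Fintype V] [DecidableEq V] {G : SimpleGraph V} {k : ℕ}

lemma fused_of_radial {K : Finset (SP G k)} (hK : (bellGraph G k).IsClique (K : Set _))
    (h4 : K.card = 4) {Q₁ Q₂ Q₃ D : SP G k} {t₁ t₂ t₃ : V}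
    (hR : RadialStruct Q₁ Q₂ Q₃ t₁ t₂ t₃)
    (h12 : Q₁ ≠ Q₂) (h13 : Q₁ ≠ Q₃) (h23 : Q₂ ≠ Q₃)
    (hD1 : D ≠ Q₁) (hD2 : D ≠ Q₂) (hD3 : D ≠ Q₃)
    (hKeq : K = {Q₁, Q₂, Q₃, D})
    {w₁ w₂ w₃ : V} (e₁ : ag w₁ D Q₁) (e₂ : ag w₂ D Q₂) (e₃ : ag w₃ D Q₃) :
    IsFusedTTetrahedronF G k K := by
  obtain ⟨out4, pat⟩ := radial_ext hR hD1 hD2 hD3 e₁ e₂ e₃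
  refine ⟨hK, h4, ?_⟩
  intro T' hT'sub hT'3
  obtain ⟨x, hxK, hxT', hT'eq⟩ := three_sub_four h4 hT'sub hT'3
  have hx4 : x = Q₁ ∨ x = Q₂ ∨ x = Q₃ ∨ x = D := by rw [hKeq] at hxK; simpa using hxK
  have hQ₁K : Q₁ ∈ K := by rw [hKeq]; simp
  have hQ₂K : Q₂ ∈ K := by rw [hKeq]; simp
  have hQ₃K : Q₃ ∈ K := by rw [hKeq]; simp
  have hDK : D ∈ K := by rw [hKeq]; simp
  have hsD1 : ∀ u, ag u Q₁ D → u = t₁ := fun u hu =>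
    realizer_eq hR.ne23 (nswap (mkd hR.p112 pat.1)) (nswap (mkd hR.p113 pat.2.1)) hu
  have sub1 : ({Q₂, Q₃, D} : Finset (SP G k)) ⊆ K := by
    intro y hy; simp at hy; rcases hy with rfl | rfl | rfl; exacts [hQ₂K, hQ₃K, hDK]
  have sub2 : ({Q₁, Q₃, D} : Finset (SP G k)) ⊆ K := by
    intro y hy; simp at hy; rcases hy with rfl | rfl | rfl; exacts [hQ₁K, hQ₃K, hDK]
  have sub3 : ({Q₁, Q₂, D} : Finset (SP G k)) ⊆ K := by
    intro y hy; simp at hy; rcases hy with rfl | rfl | rfl; exacts [hQ₁K, hQ₂K, hDK]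
  have sub4 : ({Q₁, Q₂, Q₃} : Finset (SP G k)) ⊆ K := by
    intro y hy; simp at hy; rcases hy with rfl | rfl | rfl; exacts [hQ₁K, hQ₂K, hQ₃K]
  have hE1 : K.erase Q₁ = {Q₂, Q₃, D} := by
    rw [hKeq]; ext y
    simp only [Finset.mem_erase, Finset.mem_insert, Finset.mem_singleton]
    constructor
    · rintro ⟨h1, rfl | rfl | rfl | rfl⟩
      exacts [absurd rfl h1, Or.inl rfl, Or.inr (Or.inl rfl), Or.inr (Or.inr rfl)]
    · rintro (rfl | rfl | rfl)
      exacts [⟨Ne.symm h12, Or.inr (Or.inl rfl)⟩, ⟨Ne.symm h13, Or.inr (Or.inr (Or.inl rfl))⟩,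
        ⟨hD1, Or.inr (Or.inr (Or.inr rfl))⟩]
  have hE2 : K.erase Q₂ = {Q₁, Q₃, D} := by
    rw [hKeq]; ext y
    simp only [Finset.mem_erase, Finset.mem_insert, Finset.mem_singleton]
    constructor
    · rintro ⟨h1, rfl | rfl | rfl | rfl⟩
      exacts [Or.inl rfl, absurd rfl h1, Or.inr (Or.inl rfl), Or.inr (Or.inr rfl)]
    · rintro (rfl | rfl | rfl)
      exacts [⟨h12, Or.inl rfl⟩, ⟨Ne.symm h23, Or.inr (Or.inr (Or.inl rfl))⟩,
        ⟨hD2, Or.inr (Or.inr (Or.inr rfl))⟩]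
  have hE3 : K.erase Q₃ = {Q₁, Q₂, D} := by
    rw [hKeq]; ext y
    simp only [Finset.mem_erase, Finset.mem_insert, Finset.mem_singleton]
    constructor
    · rintro ⟨h1, rfl | rfl | rfl | rfl⟩
      exacts [Or.inl rfl, Or.inr (Or.inl rfl), absurd rfl h1, Or.inr (Or.inr rfl)]
    · rintro (rfl | rfl | rfl)
      exacts [⟨h13, Or.inl rfl⟩, ⟨h23, Or.inr (Or.inl rfl)⟩,
        ⟨hD3, Or.inr (Or.inr (Or.inr rfl))⟩]
  have hE4 : K.erase D = {Q₁, Q₂, Q₃} := by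
    rw [hKeq]; ext y
    simp only [Finset.mem_erase, Finset.mem_insert, Finset.mem_singleton]
    constructor
    · rintro ⟨h1, rfl | rfl | rfl | rfl⟩
      exacts [Or.inl rfl, Or.inr (Or.inl rfl), Or.inr (Or.inr rfl), absurd rfl h1]
    · rintro (rfl | rfl | rfl)
      exacts [⟨Ne.symm hD1, Or.inl rfl⟩, ⟨Ne.symm hD2, Or.inr (Or.inl rfl)⟩,
        ⟨Ne.symm hD3, Or.inr (Or.inr (Or.inl rfl))⟩]
  rcases hx4 with h | h | h | h <;> rw [h] at hT'eq
  · rw [hT'eq, hE1]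
    exact mkTT (clique_sub hK sub1) h23 (Ne.symm hD2) (Ne.symm hD3) hR.ne12
      (fun u hu => rad_r23 hR hu)
      (fun u hu => realizer_eq hR.ne13 (mkd hR.p212 pat.1) (nswap (mkd' hR.n223 pat.2.2)) hu)
  · rw [hT'eq, hE2]
    exact mkTT (clique_sub hK sub2) h13 (Ne.symm hD1) (Ne.symm hD3) (Ne.symm hR.ne12)
      (fun u hu => rad_r13 hR hu) (fun u hu => hsD1 u hu)
  · rw [hT'eq, hE3]
    exact mkTT (clique_sub hK sub3) h12 (Ne.symm hD1) (Ne.symm hD2) (Ne.symm hR.ne13)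
      (fun u hu => rad_r12 hR hu) (fun u hu => hsD1 u hu)
  · rw [hT'eq, hE4]
    exact mkTT (clique_sub hK sub4) h12 h13 h23 (Ne.symm hR.ne23)
      (fun u hu => rad_r12 hR hu) (fun u hu => rad_r13 hR hu)

lemma cyclic_tetra {K : Finset (SP G k)} (hK : (bellGraph G k).IsClique (K : Set _))
    (h4 : K.card = 4) {A B C D : SP G k} {t₁ t₂ t₃ : V}
    (hC : CyclicStruct A B C t₁ t₂ t₃)
    (hAB : A ≠ B) (hAC : A ≠ C) (hBC : B ≠ C)
    (hDA : D ≠ A) (hDB : D ≠ B) (hDC : D ≠ C)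
    (hKeq : K = {A, B, C, D})
    {w₁ w₂ w₃ : V} (ea : ag w₁ D A) (eb : ag w₂ D B) (ec : ag w₃ D C)
    (baseTT : IsTTriangleF G k {A, B, C}) :
    IsSplitTTetrahedronF G k K ∨ IsFusedTTetrahedronF G k K := by
  obtain ⟨out4, pat⟩ := cyclic_ext hC hDA hDB hDC ea eb ec
  have hAK : A ∈ K := by rw [hKeq]; simp
  have hBK : B ∈ K := by rw [hKeq]; simp
  have hCK : C ∈ K := by rw [hKeq]; simp
  have hDK : D ∈ K := by rw [hKeq]; simp
  have hsubABC : ({A, B, C} : Finset (SP G k)) ⊆ K := by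
    intro y hy; simp at hy; rcases hy with rfl | rfl | rfl; exacts [hAK, hBK, hCK]
  have hEA : K.erase A = {B, C, D} := by
    rw [hKeq]; ext y
    simp only [Finset.mem_erase, Finset.mem_insert, Finset.mem_singleton]
    constructor
    · rintro ⟨h1, rfl | rfl | rfl | rfl⟩
      exacts [absurd rfl h1, Or.inl rfl, Or.inr (Or.inl rfl), Or.inr (Or.inr rfl)]
    · rintro (rfl | rfl | rfl)
      exacts [⟨Ne.symm hAB, Or.inr (Or.inl rfl)⟩, ⟨Ne.symm hAC, Or.inr (Or.inr (Or.inl rfl))⟩,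
        ⟨hDA, Or.inr (Or.inr (Or.inr rfl))⟩]
  have hEB : K.erase B = {A, C, D} := by
    rw [hKeq]; ext y
    simp only [Finset.mem_erase, Finset.mem_insert, Finset.mem_singleton]
    constructor
    · rintro ⟨h1, rfl | rfl | rfl | rfl⟩
      exacts [Or.inl rfl, absurd rfl h1, Or.inr (Or.inl rfl), Or.inr (Or.inr rfl)]
    · rintro (rfl | rfl | rfl)
      exacts [⟨hAB, Or.inl rfl⟩, ⟨Ne.symm hBC, Or.inr (Or.inr (Or.inl rfl))⟩,
        ⟨hDB, Or.inr (Or.inr (Or.inr rfl))⟩]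
  have hEC : K.erase C = {A, B, D} := by
    rw [hKeq]; ext y
    simp only [Finset.mem_erase, Finset.mem_insert, Finset.mem_singleton]
    constructor
    · rintro ⟨h1, rfl | rfl | rfl | rfl⟩
      exacts [Or.inl rfl, Or.inr (Or.inl rfl), absurd rfl h1, Or.inr (Or.inr rfl)]
    · rintro (rfl | rfl | rfl)
      exacts [⟨hAC, Or.inl rfl⟩, ⟨hBC, Or.inr (Or.inl rfl)⟩,
        ⟨hDC, Or.inr (Or.inr (Or.inr rfl))⟩]
  have hED : K.erase D = {A, B, C} := by
    rw [hKeq]; ext y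
    simp only [Finset.mem_erase, Finset.mem_insert, Finset.mem_singleton]
    constructor
    · rintro ⟨h1, rfl | rfl | rfl | rfl⟩
      exacts [Or.inl rfl, Or.inr (Or.inl rfl), Or.inr (Or.inr rfl), absurd rfl h1]
    · rintro (rfl | rfl | rfl)
      exacts [⟨Ne.symm hDA, Or.inl rfl⟩, ⟨Ne.symm hDB, Or.inr (Or.inl rfl)⟩,
        ⟨Ne.symm hDC, Or.inr (Or.inr (Or.inl rfl))⟩]
  have convBCD : ({B, C, D} : Finset (SP G k)) ⊆ K := by
    intro y hy; simp at hy; rcases hy with rfl | rfl | rfl; exacts [hBK, hCK, hDK]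
  have convACD : ({A, C, D} : Finset (SP G k)) ⊆ K := by
    intro y hy; simp at hy; rcases hy with rfl | rfl | rfl; exacts [hAK, hCK, hDK]
  have convABD : ({A, B, D} : Finset (SP G k)) ⊆ K := by
    intro y hy; simp at hy; rcases hy with rfl | rfl | rfl; exacts [hAK, hBK, hDK]
  rcases pat with p0 | p1
  · -- pattern 000 : split tetrahedron
    left
    refine ⟨hK, h4, {A, B, C}, hsubABC, card3 hAB hAC hBC, baseTT, ?_⟩
    intro T' hT'sub hT'3 hT'ne
    obtain ⟨x, hxK, hxT', hT'eq⟩ := three_sub_four h4 hT'sub hT'3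
    have hx4 : x = A ∨ x = B ∨ x = C ∨ x = D := by rw [hKeq] at hxK; simpa using hxK
    rcases hx4 with h | h | h | h <;> rw [h] at hT'eq
    · -- {B, C, D} anchored at t₁
      rw [hT'eq, hEA]
      refine mkS3 (clique_sub hK convBCD) hC.ag1 ?_
      refine ag_symm (ag_of_out (p := t₂) (q := t₃) ?_ (iff_of_false p0.2.2 hC.n223))
      intro a b hab
      have hab' := hab.imp (fun h => offT_rot (offT_rot h)) (fun h => offT_rot (offT_rot h))
      exact (out4 a b hab').trans (hC.out a b hab').1
    · -- {A, C, D} anchored at t₂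
      rw [hT'eq, hEB]
      refine mkS3 (clique_sub hK convACD) (ag_symm hC.ag2) ?_
      refine ag_symm (ag_of_out (p := t₁) (q := t₃) ?_ (iff_of_false p0.2.1 hC.n113))
      intro a b hab
      have hab' := hab.imp offT_swap23 offT_swap23
      exact out4 a b hab'
    · -- {A, B, D} anchored at t₃
      rw [hT'eq, hEC]
      refine mkS3 (clique_sub hK convABD) hC.ag3 ?_
      exact ag_symm (ag_of_out (p := t₁) (q := t₂)
        (fun a b hab => out4 a b hab) (iff_of_false p0.1 hC.n112))
    · exact absurd (hT'eq.trans hED) hT'ne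
  · -- pattern 111 : fused tetrahedron
    right
    refine ⟨hK, h4, ?_⟩
    intro T' hT'sub hT'3
    obtain ⟨x, hxK, hxT', hT'eq⟩ := three_sub_four h4 hT'sub hT'3
    have hx4 : x = A ∨ x = B ∨ x = C ∨ x = D := by rw [hKeq] at hxK; simpa using hxK
    have hsDA : ∀ u, ag u A D → u = t₁ := fun u hu =>
      realizer_eq hC.ne23 (nswap (mkd' hC.n112 p1.1)) (nswap (mkd' hC.n113 p1.2.1)) hu
    rcases hx4 with h | h | h | h <;> rw [h] at hT'eq
    · rw [hT'eq, hEA]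
      refine mkTT (clique_sub hK convBCD) hBC (Ne.symm hDB) (Ne.symm hDC) hC.ne12
        (fun u hu => cyc_r23 hC hu) (fun u hu => ?_)
      exact realizer_eq hC.ne13 (mkd' hC.n212 p1.1) (nswap (mkd' hC.n223 p1.2.2)) hu
    · rw [hT'eq, hEB]
      exact mkTT (clique_sub hK convACD) hAC (Ne.symm hDA) (Ne.symm hDC) (Ne.symm hC.ne12)
        (fun u hu => cyc_r13 hC hu) (fun u hu => hsDA u hu)
    · rw [hT'eq, hEC]
      exact mkTT (clique_sub hK convABD) hAB (Ne.symm hDA) (Ne.symm hDB) (Ne.symm hC.ne13)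
        (fun u hu => cyc_r12 hC hu) (fun u hu => hsDA u hu)
    · rw [hT'eq, hED]
      exact baseTT

lemma cyclic_no_two {A B C D E : SP G k} {t₁ t₂ t₃ : V}
    (hC : CyclicStruct A B C t₁ t₂ t₃)
    (hDA : D ≠ A) (hDB : D ≠ B) (hDC : D ≠ C)
    (hEA : E ≠ A) (hEB : E ≠ B) (hEC : E ≠ C) (hDE : D ≠ E)
    {a₁ a₂ a₃ b₁ b₂ b₃ : V}
    (da : ag a₁ D A) (db : ag a₂ D B) (dc : ag a₃ D C)
    (ea : ag b₁ E A) (eb : ag b₂ E B) (ec : ag b₃ E C)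
    (hadjDE : ∃ w, ag w D E) : False := by
  obtain ⟨out4D, patD⟩ := cyclic_ext hC hDA hDB hDC da db dc
  obtain ⟨out4E, patE⟩ := cyclic_ext hC hEA hEB hEC ea eb ec
  have houtDE : ∀ x y, (offT t₁ t₂ t₃ x ∨ offT t₁ t₂ t₃ y) → (rl D x y ↔ rl E x y) :=
    fun x y h => (out4D x y h).trans (out4E x y h).symm
  obtain ⟨w, hw⟩ := hadjDE
  rcases patD with p | p <;> rcases patE with q | q
  · rcases diff_triple hDE houtDE with d | d | d
    · exact d (iff_of_false p.1 q.1)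
    · exact d (iff_of_false p.2.1 q.2.1)
    · exact d (iff_of_false p.2.2 q.2.2)
  · have d1 := mkd' p.1 q.1
    have d2 := mkd' p.2.1 q.2.1
    have d3 := mkd' p.2.2 q.2.2
    rcases ag_forces hw d1 with h | h
    · rcases ag_forces hw d3 with h' | h'
      · exact hC.ne12 (h.trans h'.symm)
      · exact hC.ne13 (h.trans h'.symm)
    · rcases ag_forces hw d2 with h' | h'
      · exact hC.ne12 (h'.trans h.symm)
      · exact hC.ne23 (h.trans h'.symm)
  · have d1 := mkd p.1 q.1
    have d2 := mkd p.2.1 q.2.1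
    have d3 := mkd p.2.2 q.2.2
    rcases ag_forces hw d1 with h | h
    · rcases ag_forces hw d3 with h' | h'
      · exact hC.ne12 (h.trans h'.symm)
      · exact hC.ne13 (h.trans h'.symm)
    · rcases ag_forces hw d2 with h' | h'
      · exact hC.ne12 (h'.trans h.symm)
      · exact hC.ne23 (h.trans h'.symm)
  · rcases diff_triple hDE houtDE with d | d | d
    · exact d (iff_of_true p.1 q.1)
    · exact d (iff_of_true p.2.1 q.2.1)
    · exact d (iff_of_true p.2.2 q.2.2)

lemma radial_no_two {Q₁ Q₂ Q₃ D E : SP G k} {t₁ t₂ t₃ : V}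
    (hR : RadialStruct Q₁ Q₂ Q₃ t₁ t₂ t₃)
    (hD1 : D ≠ Q₁) (hD2 : D ≠ Q₂) (hD3 : D ≠ Q₃)
    (hE1 : E ≠ Q₁) (hE2 : E ≠ Q₂) (hE3 : E ≠ Q₃) (hDE : D ≠ E)
    {a₁ a₂ a₃ b₁ b₂ b₃ : V}
    (da : ag a₁ D Q₁) (db : ag a₂ D Q₂) (dc : ag a₃ D Q₃)
    (ea : ag b₁ E Q₁) (eb : ag b₂ E Q₂) (ec : ag b₃ E Q₃) : False := by
  obtain ⟨out4D, patD⟩ := radial_ext hR hD1 hD2 hD3 da db dc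
  obtain ⟨out4E, patE⟩ := radial_ext hR hE1 hE2 hE3 ea eb ec
  have houtDE : ∀ x y, (offT t₁ t₂ t₃ x ∨ offT t₁ t₂ t₃ y) → (rl D x y ↔ rl E x y) :=
    fun x y h => (out4D x y h).trans (out4E x y h).symm
  rcases diff_triple hDE houtDE with d | d | d
  · exact d (iff_of_false patD.1 patE.1)
  · exact d (iff_of_false patD.2.1 patE.2.1)
  · exact d (iff_of_true patD.2.2 patE.2.2)

lemma not_cyc_rad {K : Finset (SP G k)} :
    ¬ (IsCyclicTTriangleF G k K ∧ IsRadialTTriangleF G k K) := by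
  rintro ⟨⟨⟨hcl, hcard, hno⟩, P₁, P₂, P₃, hKeq, v₁, v₂, v₃, hv12, hv13, hv23,
    e3, e1, e2, m1, m2, m3⟩, ⟨_, Q₁, Q₂, Q₃, hKeq', w₁, w₂, w₃, hw12, hw13, hw23,
    f3, f1, f2, mQ⟩⟩
  obtain ⟨hP12, hP13, hP23⟩ := three_distinct (hKeq ▸ hcard)
  obtain ⟨hQ12, hQ13, hQ23⟩ := three_distinct (hKeq' ▸ hcard)
  have hT : ¬ ∃ u, ag u P₁ P₂ ∧ ag u P₂ P₃ ∧ ag u P₃ P₁ := by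
    rintro ⟨u, g1, g2, g3⟩
    apply hno
    refine ⟨u, ?_⟩
    rw [hKeq]
    exact anchor3 g1 (ag_trans g1 g2)
  have hclass := tri_classify P₁ P₂ P₃ hP12 hP13 hP23 v₁ v₂ v₃ (agE.1 e3) (agE.1 e1)
    (agE.1 e2) hT
  have hCyc : CyclicStruct P₁ P₂ P₃ v₁ v₂ v₃ := by
    rcases hclass with h | h | h | h
    · exact h
    · exact absurd (singleton_forces m1 h.p112) (Ne.symm hv12)
    · exact absurd (singleton_forces m2 h.p112) (Ne.symm hv23)
    · exact absurd (singleton_forces m3 h.p112) hv13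
  have hQmem : ∀ R : SP G k, R ∈ K → (R = P₁ ∨ R = P₂ ∨ R = P₃) := by
    intro R hR; rw [hKeq] at hR; simpa using hR
  have hQ1K : Q₁ ∈ K := by rw [hKeq']; simp
  have hQ2K : Q₂ ∈ K := by rw [hKeq']; simp
  have hQ3K : Q₃ ∈ K := by rw [hKeq']; simp
  have ev : ∀ {X Y : SP G k} {u : V}, (X = P₁ ∨ X = P₂ ∨ X = P₃) →
      (Y = P₁ ∨ Y = P₂ ∨ Y = P₃) → X ≠ Y → ag u X Y → (u = v₁ ∨ u = v₂ ∨ u = v₃) := by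
    intro X Y u hX hY hne' hu
    rcases hX with h1 | h1 | h1 <;> rcases hY with h2 | h2 | h2 <;> rw [h1, h2] at hu
    · exact absurd (h1.trans h2.symm) hne'
    · exact Or.inr (Or.inr (cyc_r12 hCyc hu))
    · exact Or.inr (Or.inl (cyc_r13 hCyc hu))
    · exact Or.inr (Or.inr (cyc_r12 hCyc (ag_symm hu)))
    · exact absurd (h1.trans h2.symm) hne'
    · exact Or.inl (cyc_r23 hCyc hu)
    · exact Or.inr (Or.inl (cyc_r13 hCyc (ag_symm hu)))
    · exact Or.inl (cyc_r23 hCyc (ag_symm hu))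
    · exact absurd (h1.trans h2.symm) hne'
  have hw3v := ev (hQmem Q₁ hQ1K) (hQmem Q₂ hQ2K) hQ12 (agE.1 f3)
  have hw1v := ev (hQmem Q₂ hQ2K) (hQmem Q₃ hQ3K) hQ23 (agE.1 f1)
  have hw2v := ev (hQmem Q₃ hQ3K) (hQmem Q₁ hQ1K) (Ne.symm hQ13) (agE.1 f2)
  have hsub : ({w₁, w₂, w₃} : Finset V) ⊆ {v₁, v₂, v₃} := by
    intro x hx
    simp only [Finset.mem_insert, Finset.mem_singleton] at hx ⊢
    rcases hx with rfl | rfl | rfl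
    exacts [hw1v, hw2v, hw3v]
  have c1 := card3 hv12 hv13 hv23
  have c2 := card3 hw12 hw13 hw23
  have hseteq : ({w₁, w₂, w₃} : Finset V) = {v₁, v₂, v₃} :=
    Finset.eq_of_subset_of_card_le hsub (by omega)
  have hv1m : v₁ ∈ ({w₁, w₂, w₃} : Finset V) := by rw [hseteq]; simp
  have hv2m : v₂ ∈ ({w₁, w₂, w₃} : Finset V) := by rw [hseteq]; simp
  have hv3m : v₃ ∈ ({w₁, w₂, w₃} : Finset V) := by rw [hseteq]; simp
  have h12' : rl Q₁ v₁ v₂ := part_rel mQ hv1m hv2m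
  have h13' : rl Q₁ v₁ v₃ := part_rel mQ hv1m hv3m
  rcases hQmem Q₁ hQ1K with h | h | h <;> rw [h] at h12' h13'
  · exact hCyc.n112 h12'
  · exact hCyc.n212 h12'
  · exact hCyc.n313 h13'

end BellAux

open BellAux

/-- **Clique classification.**  Every nonempty clique in `B_k(G)` is exactly
one of: a cyclic T-triangle, a radial T-triangle, a split T-tetrahedron, a
fused T-tetrahedron, or an S-clique. -/
theorem clique_classification [Nonempty V]
    (K : Finset {P : Multiset (Finset V) // IsStablePartition G k P})
    (hne : K.Nonempty) (hK : (bellGraph G k).IsClique (K : Set _)) :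
    (IsCyclicTTriangleF G k K ∨ IsRadialTTriangleF G k K ∨
      IsSplitTTetrahedronF G k K ∨ IsFusedTTetrahedronF G k K ∨ IsSCliqueF G k K) ∧
    ¬ (IsCyclicTTriangleF G k K ∧ IsRadialTTriangleF G k K) ∧
    ¬ (IsCyclicTTriangleF G k K ∧ IsSplitTTetrahedronF G k K) ∧
    ¬ (IsCyclicTTriangleF G k K ∧ IsFusedTTetrahedronF G k K) ∧
    ¬ (IsCyclicTTriangleF G k K ∧ IsSCliqueF G k K) ∧
    ¬ (IsRadialTTriangleF G k K ∧ IsSplitTTetrahedronF G k K) ∧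
    ¬ (IsRadialTTriangleF G k K ∧ IsFusedTTetrahedronF G k K) ∧
    ¬ (IsRadialTTriangleF G k K ∧ IsSCliqueF G k K) ∧
    ¬ (IsSplitTTetrahedronF G k K ∧ IsFusedTTetrahedronF G k K) ∧
    ¬ (IsSplitTTetrahedronF G k K ∧ IsSCliqueF G k K) ∧
    ¬ (IsFusedTTetrahedronF G k K ∧ IsSCliqueF G k K) := by
  classical
  constructor
  · -- existence
    by_cases hS : ∃ u, ∀ P ∈ K, ∀ Q ∈ K, ag u P Q
    · obtain ⟨u, hu⟩ := hS
      exact Or.inr (Or.inr (Or.inr (Or.inr ⟨hK, u, fun P hP Q hQ => agE.2 (hu P hP Q hQ)⟩)))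
    · have hadj : ∀ P ∈ K, ∀ Q ∈ K, P ≠ Q → ∃ v, ag v P Q := by
        intro P hP Q hQ hne'
        obtain ⟨-, v, hv⟩ := hK (Finset.mem_coe.2 hP) (Finset.mem_coe.2 hQ) hne'
        exact ⟨v, agE.1 hv⟩
      have hTT : ∃ A, A ∈ K ∧ ∃ B, B ∈ K ∧ ∃ C, C ∈ K ∧ A ≠ B ∧ A ≠ C ∧ B ≠ C ∧
          ¬ ∃ u, ag u A B ∧ ag u A C ∧ ag u B C := by
        by_contra hc
        apply hS
        apply global_anchor hadj
        intro P hP Q hQ R hR h1 h2 h3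
        by_contra hno
        exact hc ⟨P, hP, Q, hQ, R, hR, h1, h2, h3, hno⟩
      obtain ⟨A, hA, B, hB, C, hC, hAB, hAC, hBC, hno⟩ := hTT
      obtain ⟨v₃, e3⟩ := hadj A hA B hB hAB
      obtain ⟨v₁, e1⟩ := hadj B hB C hC hBC
      obtain ⟨v₂, e2⟩ := hadj C hC A hA (Ne.symm hAC)
      have hT : ¬ ∃ u, ag u A B ∧ ag u B C ∧ ag u C A :=
        fun ⟨u, g1, g2, g3⟩ => hno ⟨u, g1, ag_symm g3, g2⟩
      have hclass := tri_classify A B C hAB hAC hBC v₁ v₂ v₃ e3 e1 e2 hT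
      have hsubABC : ({A, B, C} : Finset _) ⊆ K := by
        intro x hx; simp at hx; rcases hx with rfl | rfl | rfl; exacts [hA, hB, hC]
      have hcABC : ({A, B, C} : Finset _).card = 3 := card3 hAB hAC hBC
      have hge3 : 3 ≤ K.card := by
        have h := Finset.card_le_card hsubABC
        rw [hcABC] at h
        exact h
      have baseTT : IsTTriangleF G k {A, B, C} := by
        rcases hclass with h | h | h | h
        · exact mkTT (clique_sub hK hsubABC) hAB hAC hBC (Ne.symm h.ne23)
            (fun u hu => cyc_r12 h hu) (fun u hu => cyc_r13 h hu)
        · exact mkTT (clique_sub hK hsubABC) hAB hAC hBC (Ne.symm h.ne23)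
            (fun u hu => rad_r12 h hu) (fun u hu => rad_r13 h hu)
        · exact mkTT (clique_sub hK hsubABC) hAB hAC hBC (Ne.symm h.ne12)
            (fun u hu => rad_r13 h (ag_symm hu)) (fun u hu => rad_r23 h (ag_symm hu))
        · exact mkTT (clique_sub hK hsubABC) hAB hAC hBC h.ne13
            (fun u hu => rad_r23 h hu) (fun u hu => rad_r12 h (ag_symm hu))
      have hcase : K.card = 3 ∨ K.card = 4 ∨ 5 ≤ K.card := by omega
      rcases hcase with h3 | h4 | h5
      · have hKeq : K = {A, B, C} := (Finset.eq_of_subset_of_card_le hsubABC (by omega)).symm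
        rcases hclass with h | h | h | h
        · refine Or.inl ⟨?_, A, B, C, hKeq, v₁, v₂, v₃, h.ne12, h.ne13, h.ne23,
            agE.2 h.ag3, agE.2 h.ag1, agE.2 h.ag2, cyclic_mem1 h, cyclic_mem2 h, cyclic_mem3 h⟩
          rw [hKeq]; exact baseTT
        · refine Or.inr (Or.inl ⟨?_, A, B, C, hKeq, v₁, v₂, v₃, h.ne12, h.ne13, h.ne23,
            agE.2 h.ag3, agE.2 h.ag1, agE.2 h.ag2, radial_mem h⟩)
          rw [hKeq]; exact baseTT
        · refine Or.inr (Or.inl ⟨?_, B, C, A, ?_, v₂, v₃, v₁, h.ne12, h.ne13, h.ne23,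
            agE.2 h.ag3, agE.2 h.ag1, agE.2 h.ag2, radial_mem h⟩)
          · rw [hKeq]; exact baseTT
          · rw [hKeq]; ext x; simp; tauto
        · refine Or.inr (Or.inl ⟨?_, C, A, B, ?_, v₃, v₁, v₂, h.ne12, h.ne13, h.ne23,
            agE.2 h.ag3, agE.2 h.ag1, agE.2 h.ag2, radial_mem h⟩)
          · rw [hKeq]; exact baseTT
          · rw [hKeq]; ext x; simp; tauto
      · have hsd : (K \ {A, B, C}).card = 1 := by
          rw [Finset.card_sdiff_of_subset hsubABC, h4, hcABC]
        obtain ⟨D, hD⟩ := Finset.card_eq_one.1 hsd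
        have hDm : D ∈ K \ ({A, B, C} : Finset _) := by
          rw [hD]; exact Finset.mem_singleton_self D
        have hDK : D ∈ K := (Finset.mem_sdiff.1 hDm).1
        have hDn := (Finset.mem_sdiff.1 hDm).2
        have hDA : D ≠ A := fun h => hDn (by rw [h]; simp)
        have hDB : D ≠ B := fun h => hDn (by rw [h]; simp)
        have hDC : D ≠ C := fun h => hDn (by rw [h]; simp)
        have hKeq4 : K = {A, B, C, D} := by
          have hsub4 : ({A, B, C, D} : Finset _) ⊆ K := by
            intro x hx; simp at hx; rcases hx with rfl | rfl | rfl | rfl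
            exacts [hA, hB, hC, hDK]
          have hc4 : ({A, B, C, D} : Finset _).card = 4 := by
            rw [Finset.card_insert_of_notMem (by simp [hAB, hAC, Ne.symm hDA]),
              Finset.card_insert_of_notMem (by simp [hBC, Ne.symm hDB]),
              Finset.card_insert_of_notMem (by simp [Ne.symm hDC]),
              Finset.card_singleton]
          exact (Finset.eq_of_subset_of_card_le hsub4 (by omega)).symm
        obtain ⟨wa, ea⟩ := hadj D hDK A hA hDA
        obtain ⟨wb, eb⟩ := hadj D hDK B hB hDB
        obtain ⟨wc, ec⟩ := hadj D hDK C hC hDC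
        rcases hclass with h | h | h | h
        · rcases cyclic_tetra hK h4 h hAB hAC hBC hDA hDB hDC hKeq4 ea eb ec baseTT with
            hs | hf
          · exact Or.inr (Or.inr (Or.inl hs))
          · exact Or.inr (Or.inr (Or.inr (Or.inl hf)))
        · exact Or.inr (Or.inr (Or.inr (Or.inl
            (fused_of_radial hK h4 h hAB hAC hBC hDA hDB hDC hKeq4 ea eb ec))))
        · refine Or.inr (Or.inr (Or.inr (Or.inl
            (fused_of_radial hK h4 h hBC (Ne.symm hAB) (Ne.symm hAC) hDB hDC hDA ?_
              eb ec ea))))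
          rw [hKeq4]; ext x; simp; tauto
        · refine Or.inr (Or.inr (Or.inr (Or.inl
            (fused_of_radial hK h4 h (Ne.symm hAC) (Ne.symm hBC) hAB hDC hDA hDB ?_
              ec ea eb))))
          rw [hKeq4]; ext x; simp; tauto
      · exfalso
        have hsd2 : 1 < (K \ {A, B, C}).card := by
          have := Finset.card_sdiff_of_subset hsubABC
          omega
        obtain ⟨D, hD, E, hE, hDE⟩ := Finset.one_lt_card.1 hsd2
        have hDK := (Finset.mem_sdiff.1 hD).1
        have hDn := (Finset.mem_sdiff.1 hD).2
        have hEK := (Finset.mem_sdiff.1 hE).1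
        have hEn := (Finset.mem_sdiff.1 hE).2
        have hDA : D ≠ A := fun h => hDn (by rw [h]; simp)
        have hDB : D ≠ B := fun h => hDn (by rw [h]; simp)
        have hDC : D ≠ C := fun h => hDn (by rw [h]; simp)
        have hEA : E ≠ A := fun h => hEn (by rw [h]; simp)
        have hEB : E ≠ B := fun h => hEn (by rw [h]; simp)
        have hEC : E ≠ C := fun h => hEn (by rw [h]; simp)
        obtain ⟨a₁, da⟩ := hadj D hDK A hA hDA
        obtain ⟨a₂, db⟩ := hadj D hDK B hB hDB
        obtain ⟨a₃, dc⟩ := hadj D hDK C hC hDC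
        obtain ⟨b₁, fa⟩ := hadj E hEK A hA hEA
        obtain ⟨b₂, fb⟩ := hadj E hEK B hB hEB
        obtain ⟨b₃, fc⟩ := hadj E hEK C hC hEC
        rcases hclass with h | h | h | h
        · exact cyclic_no_two h hDA hDB hDC hEA hEB hEC hDE da db dc fa fb fc
            (hadj D hDK E hEK hDE)
        · exact radial_no_two h hDA hDB hDC hEA hEB hEC hDE da db dc fa fb fc
        · exact radial_no_two h hDB hDC hDA hEB hEC hEA hDE db dc da fb fc fa
        · exact radial_no_two h hDC hDA hDB hEC hEA hEB hDE dc da db fc fa fb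
  refine ⟨not_cyc_rad, ?_, ?_, ?_, ?_, ?_, ?_, ?_, ?_, ?_⟩
  · rintro ⟨h1, h2⟩
    have c3 := h1.1.2.1
    have c4 := h2.2.1
    omega
  · rintro ⟨h1, h2⟩
    have c3 := h1.1.2.1
    have c4 := h2.2.1
    omega
  · rintro ⟨h1, h2⟩
    exact h1.1.2.2 h2.2
  · rintro ⟨h1, h2⟩
    have c3 := h1.1.2.1
    have c4 := h2.2.1
    omega
  · rintro ⟨h1, h2⟩
    have c3 := h1.1.2.1
    have c4 := h2.2.1
    omega
  · rintro ⟨h1, h2⟩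
    exact h1.1.2.2 h2.2
  · rintro ⟨h1, h2⟩
    obtain ⟨-, h4, T, hTsub, hT3, hTT, hrest⟩ := h1
    have hTne : T.Nonempty := by
      rw [← Finset.card_pos, hT3]; omega
    obtain ⟨x, hx⟩ := hTne
    have hxK : x ∈ K := hTsub hx
    have hsub' : K.erase x ⊆ K := Finset.erase_subset x K
    have hc3 : (K.erase x).card = 3 := by
      rw [Finset.card_erase_of_mem hxK, h4]
    have hne' : K.erase x ≠ T := fun heq => Finset.notMem_erase x K (by rw [heq]; exact hx)
    obtain ⟨u, hu⟩ := (hrest (K.erase x) hsub' hc3 hne').2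
    exact (h2.2.2 (K.erase x) hsub' hc3).2.2 ⟨u, hu⟩
  · rintro ⟨h1, h2⟩
    obtain ⟨-, -, T, hTsub, hT3, hTT, -⟩ := h1
    obtain ⟨u, hu⟩ := h2.2
    exact hTT.2.2 ⟨u, fun P hP Q hQ => hu P (hTsub hP) Q (hTsub hQ)⟩
  · rintro ⟨h1, h2⟩
    have h4 := h1.2.1
    have hKne : K.Nonempty := Finset.card_pos.1 (by omega)
    obtain ⟨x, hxK⟩ := hKne
    have hTT := h1.2.2 (K.erase x) (Finset.erase_subset x K)
      (by rw [Finset.card_erase_of_mem hxK, h4])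
    obtain ⟨u, hu⟩ := h2.2
    exact hTT.2.2 ⟨u, fun P hP Q hQ =>
      hu P (Finset.erase_subset x K hP) Q (Finset.erase_subset x K hQ)⟩
end
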